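/- arXiv:math/9706213 — 4 statements merged into one kernel-verified Lean document; each statement's English description precedes it below -/
import Mathlib

section
/- Let φ : B(H) → B(H) be a Jordan homomorphism (a complex-linear map satisfying φ(A²) = φ(A)² for all A ∈ B(H)). Then φ is either injective or identically zero. -/
open scoped InnerProductSpace ENNReal NNReal Classical

namespace JordanAux


variable {H : Type*} [NormedAddCommGroup H] [InnerProductSpace ℂ H]

/-- rank one operator `z ↦ ⟪y,z⟫ • x`. -/
noncomputable def ro (x y : H) : H →L[ℂ] H := (innerSL ℂ y).smulRight x

@[simp] lemma ro_apply (x y z : H) : ro x y z = ⟪y, z⟫_ℂ • x := rfl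

lemma ro_conj (u : H) (A : H →L[ℂ] H) :
    ro u (A u) * A * ro u (A u) = ⟪A u, A u⟫_ℂ • ro u (A u) := by
  ext z
  simp [ContinuousLinearMap.mul_apply, inner_smul_right, smul_smul, mul_comm]

lemma ro_three (u v x y : H) (hx : ⟪v, x⟫_ℂ = 0) :
    ro x u * ro u v * ro v y + ro v y * ro u v * ro x u
      = (⟪u, u⟫_ℂ * ⟪v, v⟫_ℂ) • ro x y := by
  ext z
  simp [ContinuousLinearMap.mul_apply, inner_smul_right, smul_smul, hx]
  ring




variable {R A B : Type*}

section jordan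
variable {H : Type*} [NormedAddCommGroup H] [InnerProductSpace ℂ H]
variable (φ : (H →L[ℂ] H) →ₗ[ℂ] (H →L[ℂ] H))
variable (hJ : ∀ A : H →L[ℂ] H, φ (A * A) = φ A * φ A)

include hJ

lemma Jpol (A B : H →L[ℂ] H) : φ (A * B + B * A) = φ A * φ B + φ B * φ A := by
  have e : A * B + B * A = (A + B) * (A + B) - A * A - B * B := by noncomm_ring
  rw [e, map_sub, map_sub, hJ, hJ, hJ, map_add]
  noncomm_ring

lemma J3 (A B : H →L[ℂ] H) : φ (B * A * B) = φ B * φ A * φ B := by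
  have e : B * A * B + B * A * B
      = (B * (A * B + B * A) + (A * B + B * A) * B) - ((B * B) * A + A * (B * B)) := by
    noncomm_ring
  have h1 := Jpol φ hJ (B : H →L[ℂ] H) (A * B + B * A)
  have h2 := Jpol φ hJ (B * B) A
  have h3 := Jpol φ hJ A B
  have key : φ (B * A * B) + φ (B * A * B) = φ B * φ A * φ B + φ B * φ A * φ B := by
    rw [← map_add, e, map_sub, h1, h2, h3, hJ]
    noncomm_ring
  have := congrArg (fun x => (2⁻¹ : ℂ) • x) key
  simpa [← two_smul ℂ, smul_smul] using this

lemma J3' (A B C : H →L[ℂ] H) :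
    φ (B * A * C + C * A * B) = φ B * φ A * φ C + φ C * φ A * φ B := by
  have e : B * A * C + C * A * B = (B + C) * A * (B + C) - B * A * B - C * A * C := by
    noncomm_ring
  rw [e, map_sub, map_sub, J3 φ hJ, J3 φ hJ, J3 φ hJ, map_add]
  noncomm_ring

end jordan



lemma countable_of_separation {X ι : Type*} [MetricSpace X] [TopologicalSpace.SeparableSpace X]
    (x : ι → X) (h : ∀ i j, i ≠ j → 1 ≤ dist (x i) (x j)) : Countable ι := by
  obtain ⟨D, hDc, hDd⟩ := TopologicalSpace.exists_countable_dense X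
  have hsel : ∀ i, ∃ d ∈ D, dist (x i) d < 1/2 := by
    intro i
    have := (Metric.dense_iff.mp hDd) (x i) (1/2) (by norm_num)
    obtain ⟨d, hd1, hd2⟩ := this
    exact ⟨d, hd2, Metric.mem_ball'.mp hd1⟩
  choose d hdD hdlt using hsel
  haveI : Countable D := hDc.to_subtype
  have hinj : Function.Injective (fun i => (⟨d i, hdD i⟩ : D)) := by
    intro i j hij
    by_contra hne
    have h1 := h i j hne
    have : d i = d j := congrArg Subtype.val hij
    have h2 : dist (x i) (x j) ≤ dist (x i) (d i) + dist (d j) (x j) := by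
      rw [this]; exact dist_triangle _ _ _
    have := hdlt i
    have := hdlt j
    rw [dist_comm (d j) (x j)] at h2
    linarith
  exact hinj.countable

/-- A separable infinite dimensional Hilbert space has an orthonormal family indexed by `ℕ`
with dense span. -/
lemma exists_hilbertBasis_nat (H : Type*) [NormedAddCommGroup H] [InnerProductSpace ℂ H]
    [CompleteSpace H] [TopologicalSpace.SeparableSpace H] (hinf : ¬ FiniteDimensional ℂ H) :
    Nonempty (HilbertBasis ℕ ℂ H) := by
  obtain ⟨w, b, hb⟩ := exists_hilbertBasis ℂ H
  have horth : Orthonormal ℂ ((↑) : w → H) := by rw [← hb]; exact b.orthonormal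
  have hsep : ∀ (i j : w), i ≠ j → 1 ≤ dist (i : H) (j : H) := by
    intro i j hij
    have hij' : ((i : H)) ≠ (j : H) := fun h => hij (Subtype.ext h)
    have hin : ⟪(i : H), (j : H)⟫_ℂ = 0 := horth.2 hij
    have h2 : dist (i : H) (j : H) ^ 2 = 2 := by
      rw [dist_eq_norm, @norm_sub_sq ℂ, hin]
      simp [horth.1 i, horth.1 j]
      norm_num
    nlinarith [dist_nonneg (x := (i : H)) (y := (j : H))]
  haveI hcw : Countable w := countable_of_separation ((↑) : w → H) hsep
  haveI : Infinite w := by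
    rw [Set.infinite_coe_iff]
    intro hfin
    apply hinf
    have hsp : Dense (Submodule.span ℂ (Set.range ((↑) : w → H)) : Set H) := by
      rw [Submodule.dense_iff_topologicalClosure_eq_top, ← hb]; exact b.dense_span
    rw [Subtype.range_coe] at hsp
    have hfd : FiniteDimensional ℂ (Submodule.span ℂ (w : Set H)) :=
      FiniteDimensional.span_of_finite ℂ hfin
    have hclosed : IsClosed ((Submodule.span ℂ (w : Set H)) : Set H) :=
      Submodule.closed_of_finiteDimensional _
    have : (Submodule.span ℂ (w : Set H)) = ⊤ := by
      have := hsp.closure_eq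
      rw [hclosed.closure_eq] at this
      exact SetLike.coe_injective (by rw [this, Submodule.top_coe])
    rw [this] at hfd
    exact (Submodule.topEquiv : (⊤ : Submodule ℂ H) ≃ₗ[ℂ] H).finiteDimensional
  obtain ⟨d⟩ := nonempty_denumerable (↥w)
  let e : ℕ ≃ w := (@Denumerable.eqv w d).symm
  have hrange : Set.range (fun n => (e n : H)) = w := by
    rw [show (fun n => (e n : H)) = ((↑) : w → H) ∘ e from rfl, Set.range_comp,
      Equiv.range_eq_univ, Set.image_univ, Subtype.range_coe]
  have hsp : ⊤ ≤ (Submodule.span ℂ (Set.range fun n => (e n : H))).topologicalClosure := by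
    rw [hrange]
    have := b.dense_span
    rw [hb, Subtype.range_coe] at this
    exact this.ge
  exact ⟨HilbertBasis.mk (horth.comp e e.injective) hsp⟩



section proj
variable {H : Type*} [NormedAddCommGroup H] [InnerProductSpace ℂ H] [CompleteSpace H]
variable (β : ℕ → H)

/-- The closed subspace spanned by basis vectors indexed by `S`. -/
def Ksub (S : Set ℕ) : Submodule ℂ H := (Submodule.span ℂ (β '' S)).topologicalClosure

instance KsubComplete (S : Set ℕ) : CompleteSpace (Ksub β S) :=
  IsClosed.completeSpace_coe (hs := Submodule.isClosed_topologicalClosure _)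

/-- Orthogonal projection onto `Ksub β S`, as an operator on `H`. -/
noncomputable def Pj (S : Set ℕ) : H →L[ℂ] H :=
  (Ksub β S).subtypeL.comp (Submodule.orthogonalProjectionOnto (Ksub β S))

variable {β}

lemma Pj_apply_mem {S : Set ℕ} {n : ℕ} (hn : n ∈ S) : Pj β S (β n) = β n := by
  have : β n ∈ Ksub β S :=
    (Submodule.le_topologicalClosure _) (Submodule.subset_span ⟨n, hn, rfl⟩)
  exact (Submodule.starProjection_eq_self_iff (K := Ksub β S)).mpr this

lemma Pj_apply_not_mem (horth : Orthonormal ℂ β) {S : Set ℕ} {n : ℕ} (hn : n ∉ S) :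
    Pj β S (β n) = 0 := by
  have hmem : β n ∈ (Ksub β S)ᗮ := by
    have h1 : β n ∈ (Submodule.span ℂ (β '' S))ᗮ := by
      rw [Submodule.mem_orthogonal]
      intro u hu
      induction hu using Submodule.span_induction with
      | mem x hx =>
          obtain ⟨m, hm, rfl⟩ := hx
          exact horth.2 (fun h => hn (h ▸ hm))
      | zero => simp
      | add x y _ _ hx hy => rw [inner_add_left, hx, hy, add_zero]
      | smul c x _ hx => rw [inner_smul_left, hx, mul_zero]
    have : (Ksub β S)ᗮ = (Submodule.span ℂ (β '' S))ᗮ := by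
      rw [Ksub, ← Submodule.orthogonal_orthogonal_eq_closure,
        Submodule.triorthogonal_eq_orthogonal]
    rw [this]
    exact h1
  have h0 : Submodule.orthogonalProjectionOnto (Ksub β S) (β n) = 0 :=
    Submodule.orthogonalProjectionOnto_eq_zero_iff.mpr hmem
  show ((Submodule.orthogonalProjectionOnto (Ksub β S) (β n) : Ksub β S) : H) = 0
  rw [h0]; rfl

lemma Pj_basis (horth : Orthonormal ℂ β) (S : Set ℕ) (n : ℕ) :
    Pj β S (β n) = if n ∈ S then β n else 0 := by
  split_ifs with h
  · exact Pj_apply_mem h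
  · exact Pj_apply_not_mem horth h

lemma ext_basis (hdense : Dense (Submodule.span ℂ (Set.range β) : Set H))
    {f g : H →L[ℂ] H} (h : ∀ n, f (β n) = g (β n)) : f = g := by
  refine ContinuousLinearMap.ext_on hdense ?_
  rintro x ⟨n, rfl⟩
  exact h n

variable (horth : Orthonormal ℂ β) (hdense : Dense (Submodule.span ℂ (Set.range β) : Set H))
include horth hdense

lemma Pj_mul (S T : Set ℕ) : Pj β S * Pj β T = Pj β (S ∩ T) := by
  refine ext_basis hdense fun n => ?_
  rw [ContinuousLinearMap.mul_apply, Pj_basis horth T n]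
  by_cases hT : n ∈ T
  · rw [if_pos hT, Pj_basis horth, Pj_basis horth]
    by_cases hS : n ∈ S <;> simp [hS, hT]
  · rw [if_neg hT, map_zero, Pj_basis horth]
    simp [hT]

lemma Pj_add_compl (S : Set ℕ) : Pj β S + Pj β Sᶜ = 1 := by
  refine ext_basis hdense fun n => ?_
  rw [ContinuousLinearMap.add_apply, Pj_basis horth, Pj_basis horth]
  by_cases hS : n ∈ S <;> simp [hS, ContinuousLinearMap.one_apply]

lemma Pj_finite {S : Set ℕ} (hS : S.Finite) :
    Pj β S = ∑ n ∈ hS.toFinset, ro (β n) (β n) := by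
  classical
  refine ext_basis hdense fun m => ?_
  rw [Pj_basis horth, ContinuousLinearMap.sum_apply]
  by_cases hm : m ∈ S
  · rw [if_pos hm]
    have hz : ∀ d ∈ hS.toFinset, d ≠ m → (ro (β d) (β d)) (β m) = 0 := by
      intro d _ hdm
      simp [horth.2 hdm]
    rw [Finset.sum_eq_single_of_mem m (hS.mem_toFinset.mpr hm) hz]
    simp [inner_self_eq_norm_sq_to_K, horth.1 m]
  · rw [if_neg hm]
    refine (Finset.sum_eq_zero fun n hn => ?_).symm
    have : n ≠ m := fun h => hm (h ▸ hS.mem_toFinset.mp hn)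
    simp [horth.2 this]
end proj




local notation "ℓ²" => lp (fun _ : ℕ => ℂ) 2

lemma memℓp_comp (τ : ℕ ≃ ℕ) (f : ℓ²) : Memℓp (fun n => f (τ n)) 2 := by
  have hp : (0 : ℝ) < (2 : ℝ≥0∞).toReal := by norm_num
  refine memℓp_gen ?_
  exact (τ.summable_iff (f := fun i => ‖f i‖ ^ (2 : ℝ≥0∞).toReal)).mpr
    ((memℓp_gen_iff hp).mp (lp.memℓp f))

/-- Composition with a permutation of `ℕ`, as a linear isometry equiv of `ℓ²`. -/
noncomputable def lpCongr (τ : ℕ ≃ ℕ) : ℓ² ≃ₗᵢ[ℂ] ℓ² where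
  toLinearEquiv :=
    { toFun := fun f => ⟨fun n => f (τ n), memℓp_comp τ f⟩
      invFun := fun f => ⟨fun n => f (τ.symm n), memℓp_comp τ.symm f⟩
      map_add' := by intro f g; ext n; simp [lp.coeFn_add]; rfl
      map_smul' := by intro c f; ext n; simp [lp.coeFn_smul]
      left_inv := by intro f; ext n; simp
      right_inv := by intro f; ext n; simp }
  norm_map' := by
    intro f
    have hp : (0 : ℝ) < (2 : ℝ≥0∞).toReal := by norm_num
    rw [lp.norm_eq_tsum_rpow hp, lp.norm_eq_tsum_rpow hp]
    congr 1
    exact τ.tsum_eq (f := fun i => ‖f i‖ ^ (2 : ℝ≥0∞).toReal)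

lemma lpCongr_apply (τ : ℕ ≃ ℕ) (f : ℓ²) (n : ℕ) : (lpCongr τ f : ℕ → ℂ) n = f (τ n) := rfl

lemma lpCongr_single (τ : ℕ ≃ ℕ) (n : ℕ) :
    lpCongr τ (lp.single 2 n (1 : ℂ)) = lp.single 2 (τ.symm n) (1 : ℂ) := by
  ext m
  rw [lpCongr_apply]
  by_cases h : m = τ.symm n
  · subst h
    rw [lp.single_apply_self, Equiv.apply_symm_apply, lp.single_apply_self]
  · rw [lp.single_apply_ne, lp.single_apply_ne _ _ _ h]
    intro hc
    exact h (by rw [← hc, Equiv.symm_apply_apply])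

section U
variable {H : Type*} [NormedAddCommGroup H] [InnerProductSpace ℂ H] [CompleteSpace H]

/-- The unitary permuting a Hilbert basis. -/
noncomputable def permOp (b : HilbertBasis ℕ ℂ H) (τ : ℕ ≃ ℕ) : H →L[ℂ] H :=
  ((b.repr.trans (lpCongr τ)).trans b.repr.symm).toContinuousLinearEquiv.toContinuousLinearMap

lemma permOp_basis (b : HilbertBasis ℕ ℂ H) (τ : ℕ ≃ ℕ) (n : ℕ) :
    permOp b τ (b n) = b (τ.symm n) := by
  have : permOp b τ (b n) = b.repr.symm (lpCongr τ (b.repr (b n))) := rfl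
  rw [this, b.repr_self, lpCongr_single, b.repr_symm_single]

end U

/-- An almost disjoint family of infinite, co-infinite subsets of `ℕ`. -/
def adF (r : ℝ) : Set ℕ :=
  Set.range fun n : ℕ => 2 * Encodable.encode ((n, ⌊r * 2 ^ n⌋) : ℕ × ℤ)

lemma adF_inj (r : ℝ) : Function.Injective
    (fun n : ℕ => 2 * Encodable.encode ((n, ⌊r * 2 ^ n⌋) : ℕ × ℤ)) := by
  intro m n h
  have h2 := Nat.eq_of_mul_eq_mul_left (by norm_num : 0 < 2) h
  have := Encodable.encode_injective h2
  exact (Prod.mk.injEq _ _ _ _ ▸ this).1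

lemma adF_infinite (r : ℝ) : (adF r).Infinite :=
  Set.infinite_range_of_injective (adF_inj r)

lemma adF_compl_infinite (r : ℝ) : (adF r)ᶜ.Infinite := by
  apply Set.infinite_of_injective_forall_mem
    (f := fun n : ℕ => 2 * n + 1) (fun m n h => by simpa using h)
  intro n hn
  rw [adF, Set.mem_range] at hn
  obtain ⟨m, hm⟩ := hn
  omega

lemma adF_almost_disjoint {r s : ℝ} (hrs : r ≠ s) : (adF r ∩ adF s).Finite := by
  obtain ⟨N, hN⟩ : ∃ N : ℕ, |r - s|⁻¹ < 2 ^ N :=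
    pow_unbounded_of_one_lt _ (by norm_num : (1:ℝ) < 2)
  have habs : 0 < |r - s| := abs_pos.mpr (sub_ne_zero.mpr hrs)
  refine Set.Finite.subset ((Set.finite_Iio N).image
    (fun n : ℕ => 2 * Encodable.encode ((n, ⌊r * 2 ^ n⌋) : ℕ × ℤ))) ?_
  rintro x ⟨⟨n, rfl⟩, ⟨m, hm⟩⟩
  refine ⟨n, ?_, rfl⟩
  simp only [] at hm
  have h2 := Nat.eq_of_mul_eq_mul_left (by norm_num : 0 < 2) hm
  have h3 := Encodable.encode_injective h2
  obtain ⟨h4, h5⟩ : m = n ∧ ⌊s * 2 ^ m⌋ = ⌊r * 2 ^ n⌋ := Prod.mk.injEq _ _ _ _ ▸ h3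
  subst h4
  have h6 : |s * 2 ^ m - r * 2 ^ m| < 1 := Int.abs_sub_lt_one_of_floor_eq_floor h5
  have h7 : |s - r| * 2 ^ m < 1 := by
    calc |s - r| * 2 ^ m = |(s - r) * 2 ^ m| := by
          rw [abs_mul, abs_of_pos (by positivity : (0:ℝ) < 2 ^ m)]
      _ = |s * 2 ^ m - r * 2 ^ m| := by ring_nf
      _ < 1 := h6
  -- conclude m < N
  simp only [Set.mem_Iio]
  by_contra hmN
  push_neg at hmN
  have h8 : (2:ℝ) ^ N ≤ 2 ^ m := by
    apply pow_le_pow_right₀ (by norm_num) hmN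
  rw [abs_sub_comm] at h7
  have h9 : |r - s|⁻¹ < 2 ^ m := lt_of_lt_of_le hN h8
  have h10 : 1 < |r - s| * 2 ^ m := by
    rw [← inv_inv |r - s|]
    rw [inv_mul_eq_div, lt_div_iff₀ (by positivity)]
    calc (1:ℝ) * |r - s|⁻¹ = |r - s|⁻¹ := one_mul _
      _ < 2 ^ m := h9
  linarith




lemma exists_involution {S : Set ℕ} (h1 : S.Infinite) (h2 : Sᶜ.Infinite) :
    ∃ τ : ℕ ≃ ℕ, (∀ n, τ.symm n = τ n) ∧ (∀ n, τ n ∈ S ↔ n ∉ S) := by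
  haveI : Infinite (↥S) := h1.to_subtype
  haveI : Infinite (↥(Sᶜ : Set ℕ)) := h2.to_subtype
  obtain ⟨d1⟩ := nonempty_denumerable (↥S)
  obtain ⟨d2⟩ := nonempty_denumerable (↥(Sᶜ : Set ℕ))
  let e : S ≃ (Sᶜ : Set ℕ) := (@Denumerable.eqv S d1).trans (@Denumerable.eqv (Sᶜ : Set ℕ) d2).symm
  classical
  let f : ℕ → ℕ := fun n => if h : n ∈ S then (e ⟨n, h⟩ : ℕ) else (e.symm ⟨n, h⟩ : ℕ)
  have hfS : ∀ n (h : n ∈ S), f n = (e ⟨n, h⟩ : ℕ) := fun n h => dif_pos h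
  have hfC : ∀ n (h : n ∉ S), f n = (e.symm ⟨n, h⟩ : ℕ) := fun n h => dif_neg h
  have hmem : ∀ n, f n ∈ S ↔ n ∉ S := by
    intro n
    by_cases h : n ∈ S
    · rw [hfS n h]
      have := (e ⟨n, h⟩).2
      simp only [Set.mem_compl_iff] at this
      simp [h, this]
    · rw [hfC n h]
      simp only [h, not_false_iff, iff_true]
      exact (e.symm ⟨n, h⟩).2
  have hinv : Function.Involutive f := by
    intro n
    by_cases h : n ∈ S
    · have h1' : f n ∉ S := by
        rw [hfS n h]; exact (e ⟨n, h⟩).2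
      rw [hfC (f n) h1']
      have : (⟨f n, h1'⟩ : (Sᶜ : Set ℕ)) = e ⟨n, h⟩ := Subtype.ext (hfS n h)
      rw [this, Equiv.symm_apply_apply]
    · have h1' : f n ∈ S := (hmem n).mpr h
      rw [hfS (f n) h1']
      have : (⟨f n, h1'⟩ : S) = e.symm ⟨n, h⟩ := Subtype.ext (hfC n h)
      rw [this, Equiv.apply_symm_apply]
  refine ⟨hinv.toPerm f, fun n => ?_, hmem⟩
  rw [Equiv.symm_apply_eq]
  exact (hinv n).symm

lemma no_uncountable_orthogonal_idempotents {H : Type*} [NormedAddCommGroup H]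
    [InnerProductSpace ℂ H] [TopologicalSpace.SeparableSpace H]
    (E : ℝ → (H →L[ℂ] H)) (hidem : ∀ r, E r * E r = E r) (hne : ∀ r, E r ≠ 0)
    (horth : ∀ r s, r ≠ s → E r * E s = 0) : False := by
  have hx : ∀ r, ∃ x, E r x ≠ 0 := by
    intro r
    by_contra h
    push_neg at h
    exact hne r (ContinuousLinearMap.ext fun x => by simp [h x])
  choose x hx using hx
  set w : ℝ → H := fun r => ‖E r (x r)‖⁻¹ • E r (x r) with hw
  have hwnorm : ∀ r, ‖w r‖ = 1 := fun r => norm_smul_inv_norm (hx r)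
  have hEww : ∀ r, E r (w r) = w r := by
    intro r
    have h1 : E r (E r (x r)) = E r (x r) := by
      have := congrArg (fun T => T (x r)) (hidem r)
      simpa [ContinuousLinearMap.mul_apply] using this
    simp [hw, map_smul, h1]
  have hEw0 : ∀ r s, r ≠ s → E r (w s) = 0 := by
    intro r s hrs
    have h1 : E r (E s (x s)) = 0 := by
      have := congrArg (fun T => T (x s)) (horth r s hrs)
      simpa [ContinuousLinearMap.mul_apply] using this
    simp [hw, map_smul, h1]
  haveI : Nonempty H := ⟨0⟩
  set d : ℕ → H := TopologicalSpace.denseSeq H with hd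
  have hdr : DenseRange d := TopologicalSpace.denseRange_denseSeq H
  set N : ℝ → ℕ := fun r => ⌈‖E r‖⌉₊ with hN
  have hsel : ∀ r, ∃ k, dist (w r) (d k) < 1 / (3 * (N r + 1)) := by
    intro r
    exact hdr.exists_dist_lt (w r) (by positivity)
  choose n hn using hsel
  have hninj : ¬ Function.Injective (fun r => (n r, N r)) := by
    intro hinj
    haveI := hinj.countable
    exact not_countable (α := ℝ) inferInstance
  rw [Function.not_injective_iff] at hninj
  obtain ⟨r, s, heq, hrs⟩ := hninj
  have hnrs : n r = n s := (Prod.mk.injEq _ _ _ _ ▸ heq).1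
  have hNrs : N r = N s := (Prod.mk.injEq _ _ _ _ ▸ heq).2
  -- distance bound
  have hdist : dist (w r) (w s) < 2 / (3 * (N r + 1)) := by
    have h1 := hn r
    have h2 := hn s
    rw [← hnrs, ← hNrs] at h2
    calc dist (w r) (w s) ≤ dist (w r) (d (n r)) + dist (d (n r)) (w s) := dist_triangle _ _ _
      _ < 1 / (3 * (N r + 1)) + 1 / (3 * (N r + 1)) := by
          have h2' : dist (d (n r)) (w s) < 1 / (3 * (↑(N r) + 1)) := by
            rw [dist_comm]; exact h2
          linarith
      _ = 2 / (3 * (N r + 1)) := by ring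
  have hEr : E r (w r - w s) = w r := by
    rw [map_sub, hEww r, hEw0 r s hrs, sub_zero]
  have hnorm1 : (1 : ℝ) ≤ ‖E r‖ * ‖w r - w s‖ := by
    calc (1:ℝ) = ‖w r‖ := (hwnorm r).symm
      _ = ‖E r (w r - w s)‖ := by rw [hEr]
      _ ≤ ‖E r‖ * ‖w r - w s‖ := (E r).le_opNorm _
  have hEN : ‖E r‖ ≤ (N r : ℝ) + 1 := le_trans (Nat.le_ceil _) (by exact_mod_cast Nat.le_succ _)
  have hnn : (0:ℝ) < 3 * ((N r : ℝ) + 1) := by positivity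
  have hdist' : ‖w r - w s‖ < 2 / (3 * (N r + 1)) := by
    rw [← dist_eq_norm]
    exact hdist
  have hle : ‖E r‖ * ‖w r - w s‖ ≤ ((N r : ℝ) + 1) * (2 / (3 * (N r + 1))) :=
    mul_le_mul hEN (le_of_lt hdist') (norm_nonneg _) (by positivity)
  have hfinal : ((N r : ℝ) + 1) * (2 / (3 * (N r + 1))) = 2/3 := by
    field_simp
  rw [hfinal] at hle
  linarith


lemma half_cancel {M : Type*} [AddCommGroup M] [Module ℂ M] {z : M} (h : z + z = 0) : z = 0 := by
  have h2 : (2 : ℂ) • z = 0 := by rw [two_smul]; exact h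
  rcases smul_eq_zero.mp h2 with h3 | h3
  · exact absurd h3 two_ne_zero
  · exact h3

theorem key {H : Type*} [NormedAddCommGroup H] [InnerProductSpace ℂ H] [CompleteSpace H]
    [TopologicalSpace.SeparableSpace H] (hinf : ¬ FiniteDimensional ℂ H)
    (φ : (H →L[ℂ] H) →ₗ[ℂ] (H →L[ℂ] H))
    (hJ : ∀ A : H →L[ℂ] H, φ (A * A) = φ A * φ A)
    {A : H →L[ℂ] H} (hAne : A ≠ 0) (hA : φ A = 0) : φ = 0 := by
  classical
  obtain ⟨b⟩ := exists_hilbertBasis_nat H hinf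
  set β : ℕ → H := ⇑b with hβ
  have horth : Orthonormal ℂ β := b.orthonormal
  have hdense : Dense (Submodule.span ℂ (Set.range β) : Set H) := by
    rw [Submodule.dense_iff_topologicalClosure_eq_top]
    exact b.dense_span
  -- Step 1 : a nonzero rank one operator in the kernel
  have step2 : ∀ u v : H, u ≠ 0 → v ≠ 0 → φ (ro u v) = 0 →
      ∀ x y : H, ⟪v, x⟫_ℂ = 0 → φ (ro x y) = 0 := by
    intro u v hu hv hR x y hx
    have h3 := J3' φ hJ (ro u v) (ro x u) (ro v y)
    rw [ro_three u v x y hx, hR] at h3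
    rw [map_smul] at h3
    simp only [mul_zero, zero_mul, add_zero] at h3
    have hnz : ⟪u, u⟫_ℂ * ⟪v, v⟫_ℂ ≠ 0 :=
      mul_ne_zero (inner_self_ne_zero.mpr hu) (inner_self_ne_zero.mpr hv)
    exact (smul_eq_zero.mp h3).resolve_left hnz
  obtain ⟨u, hAu⟩ : ∃ u, A u ≠ 0 := by
    by_contra h
    push_neg at h
    exact hAne (ContinuousLinearMap.ext fun z => by simp [h z])
  have hune : u ≠ 0 := fun h => hAu (by simp [h])
  have hvne : A u ≠ 0 := hAu
  have hR : φ (ro u (A u)) = 0 := by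
    have h1 := J3 φ hJ A (ro u (A u))
    rw [ro_conj u A, hA] at h1
    rw [map_smul] at h1
    simp only [mul_zero, zero_mul] at h1
    exact (smul_eq_zero.mp h1).resolve_left (inner_self_ne_zero.mpr hvne)
  -- Step 2 : all rank one operators are in the kernel
  obtain ⟨w, hwv, hwne⟩ : ∃ w : H, ⟪A u, w⟫_ℂ = 0 ∧ w ≠ 0 := by
    by_cases h0 : ⟪A u, β 0⟫_ℂ = 0
    · exact ⟨β 0, h0, horth.ne_zero 0⟩
    · refine ⟨⟪A u, β 0⟫_ℂ • β 1 - ⟪A u, β 1⟫_ℂ • β 0, ?_, ?_⟩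
      · rw [inner_sub_right, inner_smul_right, inner_smul_right]
        ring
      · intro hw0
        apply h0
        have h11 : ⟪β 1, β 1⟫_ℂ = 1 := by
          rw [inner_self_eq_norm_sq_to_K, horth.1 1]
          norm_num
        have h10 : ⟪β 1, β 0⟫_ℂ = 0 := horth.2 (by norm_num)
        have := congrArg (fun z => ⟪β 1, z⟫_ℂ) hw0
        simpa [inner_sub_right, inner_smul_right, h11, h10, horth.ne_zero 1] using this
  have hww : φ (ro w w) = 0 := step2 u (A u) hune hvne hR w w hwv
  have hro : ∀ x y : H, φ (ro x y) = 0 := by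
    intro x y
    have hwwinner : ⟪w, w⟫_ℂ ≠ 0 := inner_self_ne_zero.mpr hwne
    set c : ℂ := ⟪w, x⟫_ℂ / ⟪w, w⟫_ℂ with hc
    have hx' : ⟪w, x - c • w⟫_ℂ = 0 := by
      rw [inner_sub_right, inner_smul_right, hc]
      field_simp
      ring
    have h1 : φ (ro (x - c • w) y) = 0 := step2 w w hwne hwne hww (x - c • w) y hx'
    have h2 : φ (ro w y) = 0 := step2 u (A u) hune hvne hR w y hwv
    have hdecomp : ro x y = ro (x - c • w) y + c • ro w y := by
      ext z
      show ⟪y, z⟫_ℂ • x = ⟪y, z⟫_ℂ • (x - c • w) + c • (⟪y, z⟫_ℂ • w)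
      module
    rw [hdecomp, map_add, h1, map_smul, h2, smul_zero, add_zero]
  -- Step 3 : finite projections are in the kernel
  have hfinK : ∀ S : Set ℕ, S.Finite → φ (Pj β S) = 0 := by
    intro S hS
    rw [Pj_finite horth hdense hS, map_sum]
    exact Finset.sum_eq_zero fun n _ => hro _ _
  by_cases hzero : ∃ r : ℝ, φ (Pj β (adF r)) = 0
  -- Case A : some infinite projection is in the kernel; then 1 is in the kernel
  · obtain ⟨r, hr⟩ := hzero
    obtain ⟨τ, hτsymm, hτmem⟩ := exists_involution (adF_infinite r) (adF_compl_infinite r)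
    have hττ : ∀ n, τ (τ n) = n := fun n => by
      rw [← hτsymm n]
      exact τ.apply_symm_apply n
    set U : H →L[ℂ] H := permOp b τ with hU
    have hUβ : ∀ n, U (β n) = β (τ n) := fun n => by
      rw [hU, permOp_basis, hτsymm]
    have hUPU : U * Pj β (adF r) * U = Pj β (adF r)ᶜ := by
      refine ext_basis hdense fun n => ?_
      rw [ContinuousLinearMap.mul_apply, ContinuousLinearMap.mul_apply, hUβ n,
        Pj_basis horth, Pj_basis horth]
      by_cases h : τ n ∈ adF r
      · rw [if_pos h, hUβ, hττ, if_pos (Set.mem_compl ((hτmem n).mp h))]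
      · rw [if_neg h, map_zero, if_neg ?_]
        intro hc
        exact h ((hτmem n).mpr hc)
    have hPc : φ (Pj β (adF r)ᶜ) = 0 := by
      rw [← hUPU]
      have h1 := J3 φ hJ (Pj β (adF r)) U
      rw [hr] at h1
      simpa using h1
    have hone : φ 1 = 0 := by
      rw [← Pj_add_compl horth hdense (adF r), map_add, hr, hPc, add_zero]
    apply LinearMap.ext
    intro B
    have h2 := Jpol φ hJ 1 B
    rw [hone, one_mul, mul_one, map_add] at h2
    simp only [mul_zero, zero_mul, add_zero] at h2
    exact half_cancel h2
  -- Case B : uncountably many orthogonal nonzero idempotents, contradiction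
  · push_neg at hzero
    exfalso
    set E : ℝ → (H →L[ℂ] H) := fun r => φ (Pj β (adF r)) with hE
    have hidem : ∀ r, E r * E r = E r := by
      intro r
      have h1 := hJ (Pj β (adF r))
      rw [Pj_mul horth hdense, Set.inter_self] at h1
      exact h1.symm
    have hanti : ∀ r s, r ≠ s → E r * E s + E s * E r = 0 := by
      intro r s hrs
      have h1 := Jpol φ hJ (Pj β (adF r)) (Pj β (adF s))
      rw [Pj_mul horth hdense, Pj_mul horth hdense,
        Set.inter_comm (adF s) (adF r), map_add,
        hfinK _ (adF_almost_disjoint hrs), add_zero] at h1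
      exact h1.symm
    have horthE : ∀ r s, r ≠ s → E r * E s = 0 := by
      intro r s hrs
      have h0 := hanti r s hrs
      have hr2 : E r * E r = E r := hidem r
      have c1 : E r * E s + E r * E s * E r = 0 := by
        have hz : E r * (E r * E s + E s * E r) = 0 := by rw [h0, mul_zero]
        calc E r * E s + E r * E s * E r
            = E r * (E r * E s + E s * E r) := by
              rw [mul_add, ← mul_assoc, ← mul_assoc, hr2]
          _ = 0 := hz
      have c2 : E r * E s * E r + E s * E r = 0 := by
        have hz : (E r * E s + E s * E r) * E r = 0 := by rw [h0, zero_mul]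
        calc E r * E s * E r + E s * E r
            = (E r * E s + E s * E r) * E r := by
              rw [add_mul, mul_assoc (E s), hr2]
          _ = 0 := hz
      have c3 : E r * E s = E s * E r := by
        have e1 : E r * E s = -(E r * E s * E r) := eq_neg_of_add_eq_zero_left c1
        have e2 : E s * E r = -(E r * E s * E r) := eq_neg_of_add_eq_zero_right c2
        rw [e1, e2]
      rw [← c3] at h0
      exact half_cancel h0
    exact no_uncountable_orthogonal_idempotents E hidem hzero horthE

end JordanAux

/-- Let `H` be a complex separable infinite-dimensional Hilbert space and let
`φ : B(H) → B(H)` be a Jordan homomorphism, i.e. a complex-linear map with `φ(A²) = φ(A)²`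
for all `A`. Then `φ` is either injective or identically zero. -/
theorem jordan_hom_injective_or_zero
    {H : Type*} [NormedAddCommGroup H] [InnerProductSpace ℂ H] [CompleteSpace H]
    [TopologicalSpace.SeparableSpace H] (hinf : ¬ FiniteDimensional ℂ H)
    (φ : (H →L[ℂ] H) →ₗ[ℂ] (H →L[ℂ] H))
    (hJ : ∀ A : H →L[ℂ] H, φ (A * A) = φ A * φ A) :
    Function.Injective φ ∨ φ = 0 := by
  by_cases h : ∃ A : H →L[ℂ] H, A ≠ 0 ∧ φ A = 0
  · obtain ⟨A, hAne, hA⟩ := h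
    exact Or.inr (JordanAux.key hinf φ hJ hAne hA)
  · push_neg at h
    refine Or.inl ?_
    rw [← LinearMap.ker_eq_bot]
    rw [Submodule.eq_bot_iff]
    intro A hA
    by_contra hne
    exact (h A hne) hA
end

section
/- There is no nonzero Jordan homomorphism Φ : ℓ∞(ℕ, B(H)) → B(H) which vanishes on the set of all cofinite sequences. -/
open scoped ENNReal
open scoped Classical
set_option maxHeartbeats 1000000
set_option synthInstance.maxHeartbeats 200000



section Misc

/-- Cantor diagonal: `ℕ → Bool` is not countable. -/
lemma not_countable_funBool : ¬ Countable (ℕ → Bool) := by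
  intro h
  obtain ⟨f, hf⟩ := (countable_iff_exists_injective (ℕ → Bool)).mp h
  have hgf : ∀ z, Function.invFun f (f z) = z := Function.leftInverse_invFun hf
  set dia : ℕ → Bool := fun n => !(Function.invFun f n n) with hdia
  have : dia (f dia) = !(Function.invFun f (f dia) (f dia)) := rfl
  rw [hgf] at this
  simp at this

/-- In a separable metric space, an `ε`-separated family is countable. -/
lemma separated_countable {α : Type*} [MetricSpace α] [TopologicalSpace.SeparableSpace α]
    {X : Type*} (ξ : X → α) {ε : ℝ} (hε : 0 < ε)
    (hsep : ∀ x y : X, x ≠ y → ε ≤ dist (ξ x) (ξ y)) : Countable X := by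
  obtain ⟨D, hDc, hDd⟩ := TopologicalSpace.exists_countable_dense α
  have hch : ∀ x : X, ∃ p : α, p ∈ D ∧ dist (ξ x) p < ε / 2 := fun x => by
    obtain ⟨y, hy, hlt⟩ := hDd.exists_dist_lt (ξ x) (half_pos hε)
    exact ⟨y, hy, hlt⟩
  choose d hdD hdlt using hch
  haveI := hDc.to_subtype
  have hinj : Function.Injective (fun x => (⟨d x, hdD x⟩ : D)) := by
    intro x y hxy
    by_contra hne
    have h1 := hsep x y hne
    have h2 : d x = d y := congrArg Subtype.val hxy
    have h3 := hdlt x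
    have h4 := hdlt y
    have h5 := dist_triangle (ξ x) (d x) (ξ y)
    rw [h2] at h3 h5
    have h6 : dist (d y) (ξ y) = dist (ξ y) (d y) := dist_comm _ _
    linarith
  exact hinj.countable

end Misc

section Jordan

lemma two_cancel {S : Type*} [AddCommGroup S] [Module ℂ S] {a b : S} (h : a + a = b + b) :
    a = b := by
  have h2 : (2 : ℂ) • a = (2 : ℂ) • b := by
    rw [two_smul, two_smul]; exact h
  have h3 := congrArg (fun s : S => (2 : ℂ)⁻¹ • s) h2
  simpa [smul_smul, inv_mul_cancel₀ (two_ne_zero (α := ℂ))] using h3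

variable {H : Type*} [NormedAddCommGroup H] [InnerProductSpace ℂ H] [CompleteSpace H]
variable (Φ : lp (fun _ : ℕ => H →L[ℂ] H) ∞ →ₗ[ℂ] (H →L[ℂ] H))
variable (hJ : ∀ x, Φ (x * x) = Φ x * Φ x)

include hJ in
lemma jordan_pair (x y : lp (fun _ : ℕ => H →L[ℂ] H) ∞) : Φ (x * y + y * x) = Φ x * Φ y + Φ y * Φ x := by
  have h := hJ (x + y)
  have e1 : (x + y) * (x + y) = x * x + (x * y + y * x) + y * y := by noncomm_ring
  rw [e1] at h
  simp only [map_add] at h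
  rw [hJ x, hJ y] at h
  have e2 : (Φ x + Φ y) * (Φ x + Φ y)
      = Φ x * Φ x + (Φ (x * y) + Φ (y * x)) + Φ y * Φ y → Φ (x * y) + Φ (y * x)
      = Φ x * Φ y + Φ y * Φ x := by
    intro hh
    have e3 : (Φ x + Φ y) * (Φ x + Φ y)
        = Φ x * Φ x + (Φ x * Φ y + Φ y * Φ x) + Φ y * Φ y := by noncomm_ring
    rw [e3] at hh
    exact (add_left_cancel (add_right_cancel hh)).symm
  rw [map_add]
  exact e2 h.symm

include hJ in
lemma jordan_triple (x y : lp (fun _ : ℕ => H →L[ℂ] H) ∞) : Φ (x * y * x) = Φ x * Φ y * Φ x := by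
  set z := x * y + y * x with hz
  have h1 : Φ (x * z + z * x) = Φ x * Φ z + Φ z * Φ x := jordan_pair Φ hJ x z
  have e1 : x * z + z * x = (x * x * y + y * (x * x)) + (x * y * x + x * y * x) := by
    rw [hz]; noncomm_ring
  have h2 : Φ (x * x * y + y * (x * x)) = Φ (x * x) * Φ y + Φ y * Φ (x * x) :=
    jordan_pair Φ hJ (x * x) y
  have hsum : Φ (x * z + z * x)
      = Φ (x * x * y) + Φ (y * (x * x)) + (Φ (x * y * x) + Φ (x * y * x)) := by
    rw [e1]; simp only [map_add]
  have key : Φ (x * x * y) + Φ (y * (x * x)) + (Φ (x * y * x) + Φ (x * y * x))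
      = Φ x * Φ z + Φ z * Φ x := hsum.symm.trans h1
  rw [map_add] at h2
  rw [h2, hJ x] at key
  have hzv : Φ z = Φ x * Φ y + Φ y * Φ x := jordan_pair Φ hJ x y
  rw [hzv] at key
  have e3 : Φ x * (Φ x * Φ y + Φ y * Φ x) + (Φ x * Φ y + Φ y * Φ x) * Φ x
      = (Φ x * Φ x * Φ y + Φ y * (Φ x * Φ x)) + (Φ x * Φ y * Φ x + Φ x * Φ y * Φ x) := by
    noncomm_ring
  rw [e3] at key
  exact two_cancel (add_left_cancel key)

include hJ in
lemma jordan_transport {v w : lp (fun _ : ℕ => H →L[ℂ] H) ∞}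
    (hvwv : v * w * v = v) (hwvw : w * v * w = w) (hv : v * v = 0) (hw : w * w = 0)
    (h : Φ (w * v) = 0) : Φ (v * w) = 0 := by
  have e : (v + w) * (w * v) * (v + w) = v * w := by
    have e1 : (v + w) * (w * v) = v * w * v + w * w * v := by noncomm_ring
    have e2 : v * w * v + w * w * v = v := by rw [hvwv, hw, zero_mul, add_zero]
    rw [e1, e2, mul_add, hv, zero_add]
  have := jordan_triple Φ hJ (v + w) (w * v)
  rw [e] at this
  rw [this, h, mul_zero, zero_mul]

lemma idem_orth {S : Type*} [Ring S] [Module ℂ S] {q r : S} (hq : q * q = q) (hr : r * r = r) (h : q * r + r * q = 0) :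
    q * r = 0 := by
  have h1 : q * r + q * (r * q) = 0 := by
    have : q * (q * r) + q * (r * q) = 0 := by rw [← mul_add, h, mul_zero]
    rwa [← mul_assoc, hq] at this
  have h2 : q * (r * q) + r * q = 0 := by
    have : (q * r) * q + (r * q) * q = 0 := by rw [← add_mul, h, zero_mul]
    rwa [mul_assoc, mul_assoc, hq] at this
  have hqr : q * r = r * q := by
    have a1 : q * r = -(q * (r * q)) := eq_neg_of_add_eq_zero_left h1
    have a2 : r * q = -(q * (r * q))  := eq_neg_of_add_eq_zero_right h2
    exact a1.trans a2.symm
  have : q * r + q * r = 0 + 0 := by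
    nth_rewrite 2 [hqr]
    rw [h, add_zero]
  exact two_cancel this

end Jordan

section Coding

/-- Code of the length-`m` prefix of `x`, shifted to be positive. -/
def code (x : ℕ → Bool) (m : ℕ) : ℕ :=
  Encodable.encode (List.ofFn fun i : Fin m => x i) + 1

lemma code_ne_zero (x : ℕ → Bool) (m : ℕ) : code x m ≠ 0 := Nat.succ_ne_zero _

lemma code_cross {x y : ℕ → Bool} {m m' : ℕ} (h : code x m = code y m') : m = m' := by
  have h1 := Encodable.encode_injective (α := List Bool) (Nat.add_right_cancel h)
  have h2 := congrArg List.length h1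
  simpa using h2

lemma code_injective (x : ℕ → Bool) : Function.Injective (code x) := fun m m' h => code_cross h

lemma code_eq {x y : ℕ → Bool} {m : ℕ} (h : code x m = code y m) :
    ∀ i, i < m → x i = y i := by
  intro i hi
  have h1 := Encodable.encode_injective (α := List Bool) (Nat.add_right_cancel h)
  have h2 := List.ofFn_injective h1
  exact congrFun h2 ⟨i, hi⟩

lemma code_event {x y : ℕ → Bool} (h : x ≠ y) : {m | code x m = code y m}.Finite := by
  obtain ⟨n, hn⟩ : ∃ n, x n ≠ y n := by
    by_contra hh; push_neg at hh; exact h (funext hh)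
  apply Set.Finite.subset (Set.finite_Iic n)
  intro m hm
  simp only [Set.mem_Iic]
  by_contra hlt
  push_neg at hlt
  exact hn (code_eq hm n hlt)

/-- The set of codes of prefixes of `x`. -/
def BB (x : ℕ → Bool) : Set ℕ := Set.range (code x)

lemma BB_infinite (x : ℕ → Bool) : (BB x).Infinite :=
  Set.infinite_range_of_injective (code_injective x)

lemma BB_compl_infinite (x : ℕ → Bool) : ((BB x)ᶜ).Infinite := by
  set acode : ℕ → ℕ := fun m => Encodable.encode (List.ofFn fun i : Fin (m + 1) => !(x i)) + 1
    with hacode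
  apply Set.infinite_of_injective_forall_mem (f := acode)
  case hi =>
    intro m m' hmm
    have h1 := Encodable.encode_injective (α := List Bool) (Nat.add_right_cancel hmm)
    have h2 := congrArg List.length h1
    simpa using h2
  case hf =>
    intro m
    simp only [Set.mem_compl_iff, BB, Set.mem_range]
    rintro ⟨m', hm'⟩

    have h1 := Encodable.encode_injective (α := List Bool) (Nat.add_right_cancel hm')
    have hlen := congrArg List.length h1
    simp only [List.length_ofFn] at hlen
    subst hlen
    have h2 := List.ofFn_injective h1
    have h3 := congrFun h2 ⟨0, Nat.succ_pos m⟩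
    simp at h3

lemma BB_inter_finite {x y : ℕ → Bool} (h : x ≠ y) : (BB x ∩ BB y).Finite := by
  have hsub : BB x ∩ BB y ⊆ code x '' {m | code x m = code y m} := by
    rintro k ⟨⟨m, rfl⟩, ⟨m', hm'⟩⟩
    refine ⟨m, ?_, rfl⟩
    have : m' = m := code_cross hm'
    subst this
    exact hm'.symm
  exact ((code_event h).image _).subset hsub

lemma BB_mem_ne_zero {x : ℕ → Bool} {k : ℕ} (hk : k ∈ BB x) : k ≠ 0 := by
  obtain ⟨m, rfl⟩ := hk
  exact code_ne_zero x m

end Coding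


section Ops

/-- Partial injections of `ℕ`. -/
def PI (τ : ℕ → Option ℕ) : Prop :=
  ∀ ⦃a b c : ℕ⦄, τ a = some c → τ b = some c → a = b

lemma PI.bind {τ₁ τ₂ : ℕ → Option ℕ} (h₁ : PI τ₁) (h₂ : PI τ₂) :
    PI (fun n => (τ₁ n).bind τ₂) := by
  intro a b c ha hb
  replace ha : (τ₁ a).bind τ₂ = some c := ha
  replace hb : (τ₁ b).bind τ₂ = some c := hb
  rcases hτa : τ₁ a with _ | m
  · rw [hτa] at ha; simp at ha
  rcases hτb : τ₁ b with _ | m'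
  · rw [hτb] at hb; simp at hb
  rw [hτa] at ha; rw [hτb] at hb
  simp only [Option.bind_some] at ha hb
  have : m = m' := h₂ ha hb
  subst this
  exact h₁ hτa hτb

lemma PI_some : PI (fun n => some n) := by
  intro a b c ha hb
  simp only [Option.some_inj] at ha hb
  rw [ha, hb]

lemma PI_none : PI (fun _ => none) := by
  intro a b c ha
  simp at ha

variable {H : Type*} [NormedAddCommGroup H] [InnerProductSpace ℂ H] [CompleteSpace H]
variable {ι : Type*}

/-- Pull back an `ℓ²` function along a partial injection (transported by `g`). -/
def pf (g : ι ≃ ℕ) (τ : ℕ → Option ℕ) (f : lp (fun _ : ι => ℂ) 2) : ∀ _ : ι, ℂ :=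
  fun i => (τ (g i)).elim 0 (fun m => f (g.symm m))

lemma pf_summable (g : ι ≃ ℕ) {τ : ℕ → Option ℕ} (hτ : PI τ) (f : lp (fun _ : ι => ℂ) 2) :
    Summable (fun i : ι => ‖pf g τ f i‖ ^ (2 : ℝ≥0∞).toReal) ∧
      ∑' i : ι, ‖pf g τ f i‖ ^ (2 : ℝ≥0∞).toReal
        ≤ ∑' i : ι, ‖f i‖ ^ (2 : ℝ≥0∞).toReal := by
  have hp2 : (0 : ℝ) < (2 : ℝ≥0∞).toReal := by norm_num
  set a : ι → ℝ := fun i => ‖pf g τ f i‖ ^ (2 : ℝ≥0∞).toReal with ha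
  set gg : ι → ℝ := fun i => ‖f i‖ ^ (2 : ℝ≥0∞).toReal with hgg
  have hggs : Summable gg := (memℓp_gen_iff hp2).1 (lp.memℓp f)
  set T : Set ι := {i | ∃ m, τ (g i) = some m} with hT
  set e : T → ι := fun i => g.symm (Classical.choose i.2) with he
  have he2 : ∀ i : T, τ (g i.1) = some (g (e i)) := by
    intro i
    rw [he]
    simp only [Equiv.apply_symm_apply]
    exact Classical.choose_spec i.2
  have heinj : Function.Injective e := by
    intro i j hij
    have h1 := he2 i
    have h2 := he2 j
    rw [hij] at h1
    have := hτ h1 h2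
    exact Subtype.ext (g.injective this)
  have hpfe : ∀ i : T, pf g τ f i.1 = f (e i) := by
    intro i
    rw [pf, he2 i]
    simp only [Option.elim_some, Equiv.symm_apply_apply]
  have haT : ∀ i : T, a i.1 = gg (e i) := by
    intro i
    rw [ha, hgg]
    simp only
    rw [hpfe i]
  have haTc : ∀ i : ι, i ∉ T → a i = 0 := by
    intro i hi
    have hnone : τ (g i) = none := by
      rcases hnn : τ (g i) with _ | m
      · rfl
      · exact absurd ⟨m, hnn⟩ hi
    rw [ha]
    simp only
    rw [pf, hnone]
    simp only [Option.elim_none, norm_zero]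
    exact Real.zero_rpow (ne_of_gt hp2)
  have hsumT : Summable (fun i : T => a i.1) := by
    have heq : (fun i : T => a i.1) = gg ∘ e := funext fun i => haT i
    rw [heq]
    exact hggs.comp_injective heinj
  have hsumTc : Summable (fun i : ↥Tᶜ => a i.1) := by
    have heq : (fun i : ↥Tᶜ => a i.1) = fun _ => (0 : ℝ) := funext fun i => haTc i.1 i.2
    rw [heq]
    exact summable_zero
  have hsa : Summable a := summable_subtype_and_compl.mp ⟨hsumT, hsumTc⟩
  refine ⟨hsa, ?_⟩
  have hsupp : Function.support a ⊆ T := by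
    intro i hi
    by_contra hiT
    exact hi (haTc i hiT)
  have h1 : ∑' i : ι, a i = ∑' i : T, a i.1 := (tsum_subtype_eq_of_support_subset hsupp).symm
  rw [h1, tsum_congr haT]
  exact Summable.tsum_le_tsum_of_inj e heinj (fun c _ => Real.rpow_nonneg (norm_nonneg _) _)
    (fun i => le_rfl) ((hsumT.congr fun i => (haT i))) hggs

lemma pf_memℓp (g : ι ≃ ℕ) {τ : ℕ → Option ℕ} (hτ : PI τ) (f : lp (fun _ : ι => ℂ) 2) :
    Memℓp (pf g τ f) 2 :=
  memℓp_gen (pf_summable g hτ f).1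

/-- `pf` as an element of `ℓ²`. -/
def pfLp (g : ι ≃ ℕ) {τ : ℕ → Option ℕ} (hτ : PI τ) (f : lp (fun _ : ι => ℂ) 2) :
    lp (fun _ : ι => ℂ) 2 := ⟨pf g τ f, pf_memℓp g hτ f⟩

@[simp] lemma pfLp_coe (g : ι ≃ ℕ) {τ : ℕ → Option ℕ} (hτ : PI τ) (f : lp (fun _ : ι => ℂ) 2) :
    ⇑(pfLp g hτ f) = pf g τ f := rfl

lemma pfLp_norm_le (g : ι ≃ ℕ) {τ : ℕ → Option ℕ} (hτ : PI τ) (f : lp (fun _ : ι => ℂ) 2) :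
    ‖pfLp g hτ f‖ ≤ ‖f‖ := by
  have hp2 : (0 : ℝ) < (2 : ℝ≥0∞).toReal := by norm_num
  by_contra hlt
  push_neg at hlt
  have h2 := lp.norm_rpow_eq_tsum hp2 (pfLp g hτ f)
  have h3 := lp.norm_rpow_eq_tsum hp2 f
  have h4 := (pf_summable g hτ f).2
  have h5 : ‖pfLp g hτ f‖ ^ (2 : ℝ≥0∞).toReal ≤ ‖f‖ ^ (2 : ℝ≥0∞).toReal := by
    rw [h2, h3]; exact h4
  have h6 : ‖f‖ ^ (2 : ℝ≥0∞).toReal < ‖pfLp g hτ f‖ ^ (2 : ℝ≥0∞).toReal :=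
    Real.rpow_lt_rpow (norm_nonneg f) hlt hp2
  linarith

/-- `pf` as a linear map on `ℓ²`. -/
noncomputable def pfL (g : ι ≃ ℕ) (τ : ℕ → Option ℕ) (hτ : PI τ) :
    lp (fun _ : ι => ℂ) 2 →ₗ[ℂ] lp (fun _ : ι => ℂ) 2 where
  toFun := pfLp g hτ
  map_add' f f' := by
    apply lp.ext
    rw [lp.coeFn_add]
    funext i
    show pf g τ (f + f') i = pf g τ f i + pf g τ f' i
    simp only [pf]
    rcases h : τ (g i) with _ | m
    · simp
    · simp only [Option.elim_some, lp.coeFn_add, Pi.add_apply]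
  map_smul' c f := by
    apply lp.ext
    rw [lp.coeFn_smul]
    funext i
    show pf g τ (c • f) i = c • pf g τ f i
    simp only [pf]
    rcases h : τ (g i) with _ | m
    · simp
    · simp only [Option.elim_some, lp.coeFn_smul, Pi.smul_apply]

/-- The bounded operator on `H` induced by a partial injection of basis indices. -/
noncomputable def opC (b : HilbertBasis ι ℂ H) (g : ι ≃ ℕ) (τ : ℕ → Option ℕ) (hτ : PI τ) :
    H →L[ℂ] H :=
  (b.repr.symm.toLinearIsometry.toContinuousLinearMap.comp
    (((pfL g τ hτ).mkContinuous 1 (fun f => by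
        rw [one_mul]; exact pfLp_norm_le g hτ f)).comp
      b.repr.toLinearIsometry.toContinuousLinearMap))

lemma opC_apply (b : HilbertBasis ι ℂ H) (g : ι ≃ ℕ) (τ : ℕ → Option ℕ) (hτ : PI τ) (x : H) :
    opC b g τ hτ x = b.repr.symm (pfLp g hτ (b.repr x)) := rfl

lemma opC_norm_le (b : HilbertBasis ι ℂ H) (g : ι ≃ ℕ) (τ : ℕ → Option ℕ) (hτ : PI τ) :
    ‖opC b g τ hτ‖ ≤ 1 := by
  apply ContinuousLinearMap.opNorm_le_bound _ zero_le_one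
  intro x
  rw [one_mul, opC_apply]
  calc ‖b.repr.symm (pfLp g hτ (b.repr x))‖ = ‖pfLp g hτ (b.repr x)‖ :=
        b.repr.symm.norm_map _
    _ ≤ ‖b.repr x‖ := pfLp_norm_le g hτ _
    _ = ‖x‖ := b.repr.norm_map x

lemma opC_congr (b : HilbertBasis ι ℂ H) (g : ι ≃ ℕ) {τ₁ τ₂ : ℕ → Option ℕ}
    (h₁ : PI τ₁) (h₂ : PI τ₂) (h : ∀ n, τ₁ n = τ₂ n) :
    opC b g τ₁ h₁ = opC b g τ₂ h₂ := by
  have : τ₁ = τ₂ := funext h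
  subst this
  rfl

lemma opC_mul (b : HilbertBasis ι ℂ H) (g : ι ≃ ℕ) (τ₁ τ₂ : ℕ → Option ℕ)
    (h₁ : PI τ₁) (h₂ : PI τ₂) :
    opC b g τ₁ h₁ * opC b g τ₂ h₂ = opC b g (fun n => (τ₁ n).bind τ₂) (h₁.bind h₂) := by
  ext x
  rw [ContinuousLinearMap.mul_apply, opC_apply, opC_apply, opC_apply,
    LinearIsometryEquiv.apply_symm_apply]
  congr 1
  apply lp.ext
  funext i
  show pf g τ₁ (pfLp g h₂ (b.repr x)) i = pf g (fun n => (τ₁ n).bind τ₂) (b.repr x) i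
  simp only [pf]
  rcases h : τ₁ (g i) with _ | m
  · rfl
  · simp only [Option.elim_some, Option.bind_some, pfLp_coe, pf, Equiv.apply_symm_apply]

lemma opC_one (b : HilbertBasis ι ℂ H) (g : ι ≃ ℕ) :
    opC b g (fun n => some n) PI_some = 1 := by
  ext x
  rw [opC_apply, ContinuousLinearMap.one_apply]
  conv_rhs => rw [← b.repr.symm_apply_apply x]
  congr 1
  apply lp.ext
  funext i
  show pf g (fun n => some n) (b.repr x) i = b.repr x i
  simp only [pf, Option.elim_some, Equiv.symm_apply_apply]

lemma opC_zero (b : HilbertBasis ι ℂ H) (g : ι ≃ ℕ) :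
    opC b g (fun _ => none) PI_none = 0 := by
  ext x
  rw [opC_apply, ContinuousLinearMap.zero_apply]
  have h0 : pfLp g PI_none (b.repr x) = 0 := by
    apply lp.ext
    funext i
    show pf g (fun _ => none) (b.repr x) i = 0
    simp [pf]
  rw [h0, map_zero]

lemma opC_add (b : HilbertBasis ι ℂ H) (g : ι ≃ ℕ) (τ₁ τ₂ τ₃ : ℕ → Option ℕ)
    (h₁ : PI τ₁) (h₂ : PI τ₂) (h₃ : PI τ₃)
    (h : ∀ n, (τ₃ n = τ₁ n ∧ τ₂ n = none) ∨ (τ₃ n = τ₂ n ∧ τ₁ n = none)) :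
    opC b g τ₁ h₁ + opC b g τ₂ h₂ = opC b g τ₃ h₃ := by
  ext x
  rw [ContinuousLinearMap.add_apply, opC_apply, opC_apply, opC_apply, ← map_add]
  congr 1
  apply lp.ext
  rw [lp.coeFn_add]
  funext i
  show pf g τ₁ (b.repr x) i + pf g τ₂ (b.repr x) i = pf g τ₃ (b.repr x) i
  simp only [pf]
  rcases h (g i) with ⟨h3, h0⟩ | ⟨h3, h0⟩ <;> rw [h3, h0] <;> simp

end Ops


section Taus

/-- partial map sending `a` to `c`. -/
noncomputable def τmv (a c : ℕ) : ℕ → Option ℕ := fun n => if n = a then some c else none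

/-- partial identity on `A`. -/
noncomputable def τP (A : Set ℕ) : ℕ → Option ℕ := fun n => if n ∈ A then some n else none

/-- partial bijection from `A` to `Aᶜ` induced by an equivalence. -/
noncomputable def τh (A : Set ℕ) (γ : ↥A ≃ ↥(Aᶜ : Set ℕ)) : ℕ → Option ℕ :=
  fun n => if h : n ∈ A then some ((γ ⟨n, h⟩ : ℕ)) else none

/-- inverse of `τh`. -/
noncomputable def τh' (A : Set ℕ) (γ : ↥A ≃ ↥(Aᶜ : Set ℕ)) : ℕ → Option ℕ :=
  fun n => if h : n ∈ (Aᶜ : Set ℕ) then some ((γ.symm ⟨n, h⟩ : ℕ)) else none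

lemma PI_mv (a c : ℕ) : PI (τmv a c) := by
  intro x y k hx hy
  simp only [τmv] at hx hy
  split at hx
  · split at hy
    · omega
    · simp at hy
  · simp at hx

lemma PI_P (A : Set ℕ) : PI (τP A) := by
  intro x y k hx hy
  simp only [τP] at hx hy
  split at hx
  · split at hy
    · simp only [Option.some_inj] at hx hy; omega
    · simp at hy
  · simp at hx

lemma PI_h (A : Set ℕ) (γ : ↥A ≃ ↥(Aᶜ : Set ℕ)) : PI (τh A γ) := by
  intro x y k hx hy
  simp only [τh] at hx hy
  split at hx
  · split at hy
    · simp only [Option.some_inj] at hx hy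
      have : γ ⟨x, by assumption⟩ = γ ⟨y, by assumption⟩ := Subtype.ext (hx.trans hy.symm)
      exact congrArg Subtype.val (γ.injective this)
    · simp at hy
  · simp at hx

lemma PI_h' (A : Set ℕ) (γ : ↥A ≃ ↥(Aᶜ : Set ℕ)) : PI (τh' A γ) := by
  intro x y k hx hy
  simp only [τh'] at hx hy
  split at hx
  · split at hy
    · simp only [Option.some_inj] at hx hy
      have : γ.symm ⟨x, by assumption⟩ = γ.symm ⟨y, by assumption⟩ :=
        Subtype.ext (hx.trans hy.symm)
      exact congrArg Subtype.val (γ.symm.injective this)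
    · simp at hy
  · simp at hx

-- bind computations
lemma bind_mv_mv (a c c' : ℕ) (n : ℕ) : (τmv a c n).bind (τmv c c') = τmv a c' n := by
  simp only [τmv]
  by_cases h : n = a
  · simp [h, τmv]
  · simp [h]

lemma bind_mv_mv_ne {c a' : ℕ} (a c' : ℕ) (h : c ≠ a') (n : ℕ) :
    (τmv a c n).bind (τmv a' c') = none := by
  simp only [τmv]
  by_cases hn : n = a
  · simp [hn, h, τmv]
  · simp [hn]

lemma bind_P_P (A B : Set ℕ) (n : ℕ) : (τP A n).bind (τP B) = τP (A ∩ B) n := by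
  simp only [τP]
  by_cases hA : n ∈ A
  · by_cases hB : n ∈ B
    · simp [hA, hB, τP]
    · simp [hA, hB, τP]
  · simp [hA, fun (hc : n ∈ A ∩ B) => hA hc.1]

lemma bind_h_h' (A : Set ℕ) (γ : ↥A ≃ ↥(Aᶜ : Set ℕ)) (n : ℕ) :
    (τh A γ n).bind (τh' A γ) = τP A n := by
  simp only [τh, τh', τP]
  by_cases h : n ∈ A
  · rw [dif_pos h, if_pos h]
    simp only [Option.bind_some, τh']
    rw [dif_pos (γ ⟨n, h⟩).2]
    congr 1
    have : (⟨(γ ⟨n, h⟩ : ℕ), (γ ⟨n, h⟩).2⟩ : ↥(Aᶜ : Set ℕ)) = γ ⟨n, h⟩ := Subtype.ext rfl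
    rw [this, Equiv.symm_apply_apply]
  · rw [dif_neg h, if_neg h]
    rfl

lemma bind_h'_h (A : Set ℕ) (γ : ↥A ≃ ↥(Aᶜ : Set ℕ)) (n : ℕ) :
    (τh' A γ n).bind (τh A γ) = τP (Aᶜ) n := by
  simp only [τh, τh', τP]
  by_cases h : n ∈ (Aᶜ : Set ℕ)
  · rw [dif_pos h, if_pos h]
    simp only [Option.bind_some, τh]
    rw [dif_pos (γ.symm ⟨n, h⟩).2]
    congr 1
    have : (⟨(γ.symm ⟨n, h⟩ : ℕ), (γ.symm ⟨n, h⟩).2⟩ : ↥A) = γ.symm ⟨n, h⟩ := Subtype.ext rfl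
    rw [this, Equiv.apply_symm_apply]
  · rw [dif_neg h, if_neg h]
    rfl

lemma bind_h_h (A : Set ℕ) (γ : ↥A ≃ ↥(Aᶜ : Set ℕ)) (n : ℕ) :
    (τh A γ n).bind (τh A γ) = none := by
  simp only [τh]
  by_cases h : n ∈ A
  · rw [dif_pos h]
    simp only [Option.bind_some, τh]
    rw [dif_neg ((γ ⟨n, h⟩).2 : (γ ⟨n, h⟩ : ℕ) ∈ (Aᶜ : Set ℕ))]
  · rw [dif_neg h]
    rfl

lemma bind_h'_h' (A : Set ℕ) (γ : ↥A ≃ ↥(Aᶜ : Set ℕ)) (n : ℕ) :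
    (τh' A γ n).bind (τh' A γ) = none := by
  simp only [τh']
  by_cases h : n ∈ (Aᶜ : Set ℕ)
  · rw [dif_pos h]
    simp only [Option.bind_some, τh']
    have hmem : (γ.symm ⟨n, h⟩ : ℕ) ∈ A := (γ.symm ⟨n, h⟩).2
    rw [dif_neg (fun hc => hc hmem)]
  · rw [dif_neg h]
    rfl

lemma bind_P_h (A : Set ℕ) (γ : ↥A ≃ ↥(Aᶜ : Set ℕ)) (n : ℕ) :
    (τP A n).bind (τh A γ) = τh A γ n := by
  simp only [τP, τh]
  by_cases h : n ∈ A
  · rw [if_pos h]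
    simp only [Option.bind_some, τh]
  · rw [if_neg h, dif_neg h]
    rfl

lemma bind_P_h' (A : Set ℕ) (γ : ↥A ≃ ↥(Aᶜ : Set ℕ)) (n : ℕ) :
    (τP (Aᶜ) n).bind (τh' A γ) = τh' A γ n := by
  simp only [τP, τh']
  by_cases h : n ∈ (Aᶜ : Set ℕ)
  · rw [if_pos h]
    simp only [Option.bind_some, τh']
  · rw [if_neg h, dif_neg h]
    rfl

end Taus

section Seqq

variable {H : Type*} [NormedAddCommGroup H] [InnerProductSpace ℂ H] [CompleteSpace H]

/-- Bounded sequence of operators as an element of `ℓ∞`. -/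
noncomputable def seqq (T : ℕ → H →L[ℂ] H) (hT : ∀ m, ‖T m‖ ≤ 1) :
    lp (fun _ : ℕ => H →L[ℂ] H) ∞ :=
  ⟨T, memℓp_infty ⟨1, by rintro r ⟨m, rfl⟩; exact hT m⟩⟩

@[simp] lemma seqq_coe (T : ℕ → H →L[ℂ] H) (hT : ∀ m, ‖T m‖ ≤ 1) : ⇑(seqq T hT) = T := rfl

lemma seqq_mul {T S R : ℕ → H →L[ℂ] H} (hT : ∀ m, ‖T m‖ ≤ 1) (hS : ∀ m, ‖S m‖ ≤ 1)
    (hR : ∀ m, ‖R m‖ ≤ 1) (h : ∀ m, T m * S m = R m) :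
    seqq T hT * seqq S hS = seqq R hR := by
  apply lp.ext
  rw [lp.infty_coeFn_mul]
  funext m
  exact h m

lemma seqq_add {T S R : ℕ → H →L[ℂ] H} (hT : ∀ m, ‖T m‖ ≤ 1) (hS : ∀ m, ‖S m‖ ≤ 1)
    (hR : ∀ m, ‖R m‖ ≤ 1) (h : ∀ m, T m + S m = R m) :
    seqq T hT + seqq S hS = seqq R hR := by
  apply lp.ext
  rw [lp.coeFn_add]
  funext m
  exact h m

lemma seqq_zero {T : ℕ → H →L[ℂ] H} (hT : ∀ m, ‖T m‖ ≤ 1) (h : ∀ m, T m = 0) :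
    seqq T hT = 0 := by
  apply lp.ext
  funext m
  exact h m

lemma seqq_one [Nontrivial H] {T : ℕ → H →L[ℂ] H} (hT : ∀ m, ‖T m‖ ≤ 1) (h : ∀ m, T m = 1) :
    seqq T hT = 1 := by
  apply lp.ext
  rw [lp.infty_coeFn_one]
  funext m
  exact h m

end Seqq
section Uncountable

variable {H : Type*} [NormedAddCommGroup H] [InnerProductSpace ℂ H]
  [TopologicalSpace.SeparableSpace H]

/-- There is no uncountable family of nonzero pairwise-orthogonal idempotents in `B(H)`
for separable `H`. -/
lemma no_uncountable_idem (q : (ℕ → Bool) → (H →L[ℂ] H))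
    (hidem : ∀ x, q x * q x = q x) (hne : ∀ x, q x ≠ 0)
    (horth : ∀ x y, x ≠ y → q x * q y = 0) : False := by
  have hQ : ∀ x, ∃ v : H, q x v ≠ 0 := by
    intro x
    by_contra hc
    push_neg at hc
    exact hne x (ContinuousLinearMap.ext fun v => by rw [hc v]; rfl)
  choose v hv using hQ
  set ξ : (ℕ → Bool) → H := fun x => ‖q x (v x)‖⁻¹ • q x (v x) with hξ
  have hnorm : ∀ x, ‖ξ x‖ = 1 := by
    intro x
    rw [hξ]
    simp only [norm_smul, norm_inv, norm_norm]
    exact inv_mul_cancel₀ (norm_ne_zero_iff.mpr (hv x))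
  have hfix : ∀ x, q x (ξ x) = ξ x := by
    intro x
    have h1 : (q x * q x) (v x) = q x (v x) := by rw [hidem x]
    rw [ContinuousLinearMap.mul_apply] at h1
    calc q x (ξ x) = ‖q x (v x)‖⁻¹ • (q x ((q x) (v x))) := (q x).map_smul_of_tower _ _
    _ = ‖q x (v x)‖⁻¹ • (q x (v x)) := by rw [h1]
    _ = ξ x := rfl
  have hkill : ∀ x y, x ≠ y → q x (ξ y) = 0 := by
    intro x y hxy
    have h1 : (q x * q y) (v y) = 0 := by rw [horth x y hxy]; rfl
    rw [ContinuousLinearMap.mul_apply] at h1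
    calc q x (ξ y) = ‖q y (v y)‖⁻¹ • (q x ((q y) (v y))) := (q x).map_smul_of_tower _ _
    _ = 0 := by rw [h1, smul_zero]
  have hM : ∃ M : ℕ, ¬ (Set.Countable {x : ℕ → Bool | ‖q x‖ ≤ (M : ℝ)}) := by
    by_contra hc
    push_neg at hc
    have huniv : (Set.univ : Set (ℕ → Bool)).Countable := by
      have hsub : (Set.univ : Set (ℕ → Bool)) ⊆ ⋃ M : ℕ, {x | ‖q x‖ ≤ (M : ℝ)} := by
        intro x _
        obtain ⟨M, hM'⟩ := exists_nat_ge ‖q x‖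
        exact Set.mem_iUnion.mpr ⟨M, hM'⟩
      exact (Set.countable_iUnion hc).mono hsub
    exact not_countable_funBool (Set.countable_univ_iff.mp huniv)
  obtain ⟨M, hM⟩ := hM
  apply hM
  rw [← Set.countable_coe_iff]
  apply separated_countable (ξ := fun z : {x : ℕ → Bool | ‖q x‖ ≤ (M : ℝ)} => ξ z.1)
    (ε := ((M : ℝ) + 1)⁻¹) (by positivity)
  intro z z' hzz
  by_contra hlt
  push_neg at hlt
  have hne' : z.1 ≠ z'.1 := fun h => hzz (Subtype.ext h)
  have h1 : q z.1 (ξ z.1 - ξ z'.1) = ξ z.1 := by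
    rw [map_sub, hfix, hkill _ _ hne', sub_zero]
  have h2 := (q z.1).le_opNorm (ξ z.1 - ξ z'.1)
  rw [h1, hnorm] at h2
  have h3 : ‖q z.1‖ ≤ (M : ℝ) := z.2
  have h4 : ‖ξ z.1 - ξ z'.1‖ < ((M : ℝ) + 1)⁻¹ := by rwa [dist_eq_norm] at hlt
  have h5 : ‖q z.1‖ * ‖ξ z.1 - ξ z'.1‖ ≤ (M : ℝ) * ((M : ℝ) + 1)⁻¹ :=
    mul_le_mul h3 (le_of_lt h4) (norm_nonneg _) (Nat.cast_nonneg M)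
  have h6 : (M : ℝ) * ((M : ℝ) + 1)⁻¹ < 1 := by
    rw [← div_eq_mul_inv, div_lt_one (by positivity)]
    linarith
  linarith

end Uncountable

section MainDefs

variable {H : Type*} [NormedAddCommGroup H] [InnerProductSpace ℂ H] [CompleteSpace H]
variable {ι : Type*}

/-- The bounded sequence of "diagonal" rank-one style projections along `a`. -/
noncomputable def XX (b : HilbertBasis ι ℂ H) (g : ι ≃ ℕ) (a : ℕ → ℕ) :
    lp (fun _ : ℕ => H →L[ℂ] H) ∞ :=
  seqq (fun m => opC b g (τmv (a m) (a m)) (PI_mv _ _)) (fun m => opC_norm_le b g _ _)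

/-- The mover sequences. -/
noncomputable def VV (b : HilbertBasis ι ℂ H) (g : ι ≃ ℕ) (a c : ℕ → ℕ) :
    lp (fun _ : ℕ => H →L[ℂ] H) ∞ :=
  seqq (fun m => opC b g (τmv (a m) (c m)) (PI_mv _ _)) (fun m => opC_norm_le b g _ _)

/-- The constant sequence of diagonal projections onto `A`. -/
noncomputable def CC (b : HilbertBasis ι ℂ H) (g : ι ≃ ℕ) (A : Set ℕ) :
    lp (fun _ : ℕ => H →L[ℂ] H) ∞ :=
  seqq (fun _ => opC b g (τP A) (PI_P A)) (fun _ => opC_norm_le b g _ _)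

variable (b : HilbertBasis ι ℂ H) (g : ι ≃ ℕ)

lemma XX_idem (a : ℕ → ℕ) : XX b g a * XX b g a = XX b g a :=
  seqq_mul _ _ _ (fun m => by
    rw [opC_mul]
    exact opC_congr b g _ _ (bind_mv_mv _ _ _))

lemma VV_mul (a c : ℕ → ℕ) : VV b g a c * VV b g c a = XX b g a :=
  seqq_mul _ _ _ (fun m => by
    rw [opC_mul]
    exact opC_congr b g _ _ (bind_mv_mv _ _ _))

lemma VV_sq (a c : ℕ → ℕ) (h : ∀ m, a m ≠ c m) : VV b g a c * VV b g a c = 0 := by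
  have h1 : VV b g a c * VV b g a c
      = seqq (fun _ => (0 : H →L[ℂ] H)) (fun _ => by simp) :=
    seqq_mul _ _ _ (fun m => by
      rw [opC_mul]
      rw [opC_congr b g _ PI_none (bind_mv_mv_ne _ _ (fun hh => h m hh.symm) )]
      exact opC_zero b g)
  rw [h1]
  exact seqq_zero _ (fun _ => rfl)

lemma XX_mul_VV (a c : ℕ → ℕ) : XX b g a * VV b g a c = VV b g a c :=
  seqq_mul _ _ _ (fun m => by
    rw [opC_mul]
    exact opC_congr b g _ _ (bind_mv_mv _ _ _))

lemma CC_mul (A B : Set ℕ) : CC b g A * CC b g B = CC b g (A ∩ B) :=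
  seqq_mul _ _ _ (fun m => by
    rw [opC_mul]
    exact opC_congr b g _ _ (bind_P_P _ _))

end MainDefs

section MainProof

variable {H : Type*} [NormedAddCommGroup H] [InnerProductSpace ℂ H] [CompleteSpace H]
variable {ι : Type*} (b : HilbertBasis ι ℂ H) (g : ι ≃ ℕ)
variable (Φ : lp (fun _ : ℕ => H →L[ℂ] H) ∞ →ₗ[ℂ] (H →L[ℂ] H))
variable (hJ : ∀ x, Φ (x * x) = Φ x * Φ x)

include hJ in
lemma moveXX (a c : ℕ → ℕ) (hner : ∀ m, a m ≠ c m) (h : Φ (XX b g c) = 0) :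
    Φ (XX b g a) = 0 := by
  have hvw := VV_mul b g a c
  have hwv := VV_mul b g c a
  have hvv := VV_sq b g a c hner
  have hww := VV_sq b g c a (fun m => (hner m).symm)
  have hvwv : VV b g a c * VV b g c a * VV b g a c = VV b g a c := by
    rw [hvw]; exact XX_mul_VV b g a c
  have hwvw : VV b g c a * VV b g a c * VV b g c a = VV b g c a := by
    rw [hwv]; exact XX_mul_VV b g c a
  have := jordan_transport Φ hJ hvwv hwvw hvv hww (by rw [hwv]; exact h)
  rw [hvw] at this
  exact this

include hJ in
lemma CC_compl_add [Nontrivial H] (A : Set ℕ) : CC b g A + CC b g (Aᶜ) = 1 := by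
  have h1 : CC b g A + CC b g Aᶜ
      = seqq (fun _ => (1 : H →L[ℂ] H)) (fun _ => by simp) := by
    apply seqq_add
    intro m
    rw [opC_add b g (τP A) (τP Aᶜ) (fun n => some n) (PI_P A) (PI_P Aᶜ) PI_some ?cond]
    · exact opC_one b g
    case cond =>
      intro n
      by_cases hn : n ∈ A
      · exact Or.inl ⟨(if_pos hn).symm, if_neg (fun hc => hc hn)⟩
      · exact Or.inr ⟨(if_pos (hn : n ∈ (Aᶜ : Set ℕ))).symm, if_neg hn⟩
  rw [h1]
  exact seqq_one _ (fun _ => rfl)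

include hJ in
lemma CC_nonnull [Nontrivial H] (hone : Φ 1 ≠ 0) (A : Set ℕ) (γ : ↥A ≃ ↥(Aᶜ : Set ℕ)) :
    Φ (CC b g A) ≠ 0 := by
  intro h0
  set V : lp (fun _ : ℕ => H →L[ℂ] H) ∞ :=
    seqq (fun _ => opC b g (τh A γ) (PI_h A γ)) (fun _ => opC_norm_le b g _ _) with hV
  set W : lp (fun _ : ℕ => H →L[ℂ] H) ∞ :=
    seqq (fun _ => opC b g (τh' A γ) (PI_h' A γ)) (fun _ => opC_norm_le b g _ _) with hW
  have hvw : V * W = CC b g A := seqq_mul _ _ _ (fun m => by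
    rw [opC_mul]; exact opC_congr b g _ _ (bind_h_h' A γ))
  have hwv : W * V = CC b g (Aᶜ) := seqq_mul _ _ _ (fun m => by
    rw [opC_mul]; exact opC_congr b g _ _ (bind_h'_h A γ))
  have hvv : V * V = 0 := by
    have h1 : V * V = seqq (fun _ => (0 : H →L[ℂ] H)) (fun _ => by simp) :=
      seqq_mul _ _ _ (fun m => by
        rw [opC_mul, opC_congr b g _ PI_none (bind_h_h A γ)]
        exact opC_zero b g)
    rw [h1]; exact seqq_zero _ (fun _ => rfl)
  have hww : W * W = 0 := by
    have h1 : W * W = seqq (fun _ => (0 : H →L[ℂ] H)) (fun _ => by simp) :=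
      seqq_mul _ _ _ (fun m => by
        rw [opC_mul, opC_congr b g _ PI_none (bind_h'_h' A γ)]
        exact opC_zero b g)
    rw [h1]; exact seqq_zero _ (fun _ => rfl)
  have hvwv : V * W * V = V := by
    rw [hvw]
    exact seqq_mul _ _ _ (fun m => by
      rw [opC_mul]; exact opC_congr b g _ _ (bind_P_h A γ))
  have hwvw : W * V * W = W := by
    rw [hwv]
    exact seqq_mul _ _ _ (fun m => by
      rw [opC_mul]; exact opC_congr b g _ _ (bind_P_h' A γ))
  have hcompl : Φ (CC b g (Aᶜ)) = 0 := by
    have := jordan_transport Φ hJ hwvw hvwv hww hvv (by rw [hvw]; exact h0)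
    rw [hwv] at this
    exact this
  have hsum := CC_compl_add b g Φ hJ A
  have : Φ 1 = 0 := by
    rw [← hsum, map_add, h0, hcompl, add_zero]
  exact hone this

include hJ in
lemma CC_finset_null [Nontrivial H] (h0 : Φ (XX b g (fun _ => 0)) = 0) (F : Finset ℕ) :
    Φ (CC b g (↑F : Set ℕ)) = 0 := by
  induction F using Finset.induction_on with
  | empty =>
    have h2 : opC b g (τP (↑(∅ : Finset ℕ) : Set ℕ)) (PI_P _) = 0 := by
      rw [opC_congr b g (PI_P _) PI_none (fun n => by simp [τP])]
      exact opC_zero b g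
    have h1 : CC b g (↑(∅ : Finset ℕ) : Set ℕ) = 0 := by
      apply seqq_zero
      intro m
      exact h2
    rw [h1, map_zero]
  | @insert a F haF ih =>
    have hadd : XX b g (fun _ => a) + CC b g (↑F : Set ℕ) = CC b g (↑(insert a F) : Set ℕ) := by
      apply seqq_add
      intro m
      apply opC_add
      intro n
      by_cases hn : n = a
      · refine Or.inl ⟨?_, ?_⟩
        · rw [τP, τmv, if_pos (show n ∈ (↑(insert a F) : Set ℕ) by simp [hn]), if_pos hn]
          rw [hn]
        · rw [τP, if_neg (show ¬ n ∈ (↑F : Set ℕ) by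
            simp only [Finset.mem_coe, hn]; exact haF)]
      · refine Or.inr ⟨?_, ?_⟩
        · rw [τP, τP]
          by_cases hF : n ∈ (↑F : Set ℕ)
          · rw [if_pos (by simp only [Finset.coe_insert, Set.mem_insert_iff]; exact Or.inr hF),
              if_pos hF]
          · rw [if_neg (by simp only [Finset.coe_insert, Set.mem_insert_iff]; tauto), if_neg hF]
        · rw [τmv, if_neg hn]
    rw [← hadd, map_add, ih, add_zero]
    by_cases ha0 : a = 0
    · subst ha0; exact h0
    · exact moveXX b g Φ hJ (fun _ => a) (fun _ => 0) (fun _ => ha0) h0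

end MainProof


/-- Let `H` be a complex separable infinite-dimensional Hilbert space.
There is no nonzero Jordan homomorphism `Φ : ℓ∞(ℕ, B(H)) → B(H)` (i.e. complex-linear map
with `Φ(x²) = Φ(x)²`) which vanishes on the set of all cofinite sequences (sequences all but
finitely many of whose coordinates are zero). -/
theorem no_nonzero_jordan_hom_vanishing_on_cofinite
    {H : Type*} [NormedAddCommGroup H] [InnerProductSpace ℂ H] [CompleteSpace H]
    [TopologicalSpace.SeparableSpace H] [Nontrivial H]
    (hinf : ¬ FiniteDimensional ℂ H) :
    ¬ ∃ Φ : lp (fun _ : ℕ => H →L[ℂ] H) ∞ →ₗ[ℂ] (H →L[ℂ] H),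
        (∀ x, Φ (x * x) = Φ x * Φ x) ∧ Φ ≠ 0 ∧
        ∀ x : lp (fun _ : ℕ => H →L[ℂ] H) ∞,
          {n : ℕ | (x : ∀ _ : ℕ, H →L[ℂ] H) n ≠ 0}.Finite → Φ x = 0 := by
  rintro ⟨Φ, hJ, hne, hvan⟩
  obtain ⟨w, b, hb⟩ := exists_hilbertBasis ℂ H
  haveI hcw : Countable ↥w := by
    apply separated_countable (ξ := fun i : ↥w => (i : H)) (ε := 1) one_pos
    intro i j hij
    have ho := b.orthonormal
    rw [hb] at ho
    have h1 : ‖(i : H)‖ = 1 := ho.1 i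
    have h1' : ‖(j : H)‖ = 1 := ho.1 j
    have h2 : (inner ℂ (i : H) (j : H) : ℂ) = 0 := ho.2 hij
    have h3 : ‖(i : H) - (j : H)‖ ^ 2 = 2 := by
      rw [norm_sub_sq (𝕜 := ℂ), h1, h1', h2]
      norm_num
    rw [dist_eq_norm]
    nlinarith [norm_nonneg ((i : H) - (j : H))]
  haveI hiw : Infinite ↥w := by
    rw [Set.infinite_coe_iff]
    by_contra hfin
    rw [Set.not_infinite] at hfin
    apply hinf
    have hd := b.dense_span
    rw [hb, Subtype.range_coe] at hd
    haveI hfd : FiniteDimensional ℂ (Submodule.span ℂ w) :=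
      FiniteDimensional.span_of_finite ℂ hfin
    have hclosed : IsClosed ((Submodule.span ℂ w : Submodule ℂ H) : Set H) :=
      Submodule.closed_of_finiteDimensional _
    have htop : (Submodule.span ℂ w) = ⊤ := by
      rw [← hclosed.submodule_topologicalClosure_eq]
      exact hd
    rw [htop] at hfd
    exact Submodule.topEquiv.finiteDimensional
  obtain ⟨dI⟩ := nonempty_denumerable ↥w
  let g : ↥w ≃ ℕ := @Denumerable.eqv _ dI
  have hone : Φ 1 ≠ 0 := by
    intro h1
    apply hne
    apply LinearMap.ext
    intro z
    have h2 := jordan_triple Φ hJ 1 z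
    rw [one_mul, mul_one] at h2
    rw [LinearMap.zero_apply, h2, h1]
    simp
  by_cases hc : Φ (XX b g (fun _ => 0)) = 0
  · -- Case 2 : all "rank one" constant diagonal sequences are annihilated.
    apply no_uncountable_idem (q := fun x => Φ (CC b g (BB x)))
    · intro x
      rw [← hJ, CC_mul, Set.inter_self]
    · intro x
      haveI hBi : Infinite ↥(BB x) := Set.infinite_coe_iff.mpr (BB_infinite x)
      haveI hBci : Infinite ↥((BB x)ᶜ : Set ℕ) :=
        Set.infinite_coe_iff.mpr (BB_compl_infinite x)
      obtain ⟨e1⟩ := nonempty_denumerable ↥(BB x)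
      obtain ⟨e2⟩ := nonempty_denumerable ↥((BB x)ᶜ : Set ℕ)
      exact CC_nonnull b g Φ hJ hone (BB x)
        ((@Denumerable.eqv _ e1).trans (@Denumerable.eqv _ e2).symm)
    · intro x y hxy
      have hxyf := BB_inter_finite hxy
      have hnull : Φ (CC b g (BB x ∩ BB y)) = 0 := by
        have hset : BB x ∩ BB y = (↑hxyf.toFinset : Set ℕ) := (Set.Finite.coe_toFinset _).symm
        rw [hset]
        exact CC_finset_null b g Φ hJ hc hxyf.toFinset
      have hnull' : Φ (CC b g (BB y ∩ BB x)) = 0 := by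
        rw [Set.inter_comm]; exact hnull
      have hpair := jordan_pair Φ hJ (CC b g (BB x)) (CC b g (BB y))
      rw [map_add, CC_mul, CC_mul, hnull, hnull'] at hpair
      exact idem_orth (by rw [← hJ, CC_mul, Set.inter_self])
        (by rw [← hJ, CC_mul, Set.inter_self]) (by rw [← hpair]; norm_num)
  · -- Case 1 : some "rank one" diagonal sequence survives.
    apply no_uncountable_idem (q := fun x => Φ (XX b g (code x)))
    · intro x
      rw [← hJ, XX_idem]
    · intro x h0
      apply hc
      exact moveXX b g Φ hJ (fun _ => 0) (code x) (fun m => (code_ne_zero x m).symm) h0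
    · intro x y hxy
      have hfin : ∀ (u v : ℕ → Bool), u ≠ v →
          Φ (XX b g (code u) * XX b g (code v)) = 0 := by
        intro u v huv
        apply hvan
        apply Set.Finite.subset (code_event huv)
        intro m hm
        by_contra hnem
        apply hm
        show (↑(XX b g (code u) * XX b g (code v)) : ∀ _ : ℕ, H →L[ℂ] H) m = 0
        rw [lp.infty_coeFn_mul]
        show (XX b g (code u)) m * (XX b g (code v)) m = 0
        show opC b g (τmv (code u m) (code u m)) (PI_mv _ _)
            * opC b g (τmv (code v m) (code v m)) (PI_mv _ _) = 0
        rw [opC_mul, opC_congr b g _ PI_none (bind_mv_mv_ne _ _ hnem)]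
        exact opC_zero b g
      have hpair := jordan_pair Φ hJ (XX b g (code x)) (XX b g (code y))
      rw [map_add, hfin x y hxy, hfin y x (fun hh => hxy hh.symm)] at hpair
      exact idem_orth (by rw [← hJ, XX_idem]) (by rw [← hJ, XX_idem])
        (by rw [← hpair]; norm_num)
end

section
/- There is no Jordan isomorphism (i.e. bijective complex-linear map Φ with Φ(A²) = Φ(A)² for all A) from ℓ∞(ℕ, B(H)) onto C(βℕ, B(H)). In particular, the C*-algebras ℓ∞(ℕ, B(H)) and C(βℕ, B(H)) are not isomorphic even as Jordan algebras. -/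
open scoped ENNReal

open scoped ComplexInnerProductSpace



section RingAux

variable {R : Type*} [Ring R]

lemma aux_ring1 (z x y : R) (hzy : z * y = y * z) :
    (z*x + x*z)*y + y*(z*x + x*z) = z*(x*y + y*x) + (x*y + y*x)*z := by
  have h : ((z*x + x*z)*y + y*(z*x + x*z)) - (z*(x*y + y*x) + (x*y + y*x)*z)
      = x*(z*y - y*z) - (z*y - y*z)*x := by noncomm_ring
  rw [hzy, sub_self, mul_zero, zero_mul, sub_zero] at h
  exact sub_eq_zero.mp h

lemma aux_ring2 (W A B : R)
    (h : (W*A + A*W)*B + B*(W*A + A*W) = W*(A*B + B*A) + (A*B + B*A)*W) :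
    (W*B - B*W)*A = A*(W*B - B*W) := by
  have h2 : (W*B - B*W)*A - A*(W*B - B*W)
      = (W*(A*B + B*A) + (A*B + B*A)*W) - ((W*A + A*W)*B + B*(W*A + A*W)) := by noncomm_ring
  rw [← h, sub_self] at h2
  exact sub_eq_zero.mp h2

end RingAux

lemma aux_smul_cancel {H : Type*} [AddCommGroup H] [Module ℂ H] {a b : ℂ} {v : H}
    (hv : v ≠ 0) (h : a • v = b • v) : a = b := by
  by_contra hab
  apply hv
  have h2 : (a - b) • v = 0 := by rw [sub_smul, h, sub_self]
  have h3 := congrArg (fun w : H => (a-b)⁻¹ • w) h2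
  simpa [smul_smul, inv_mul_cancel₀ (sub_ne_zero.mpr hab)] using h3

section Hilbert

variable {H : Type*} [NormedAddCommGroup H] [InnerProductSpace ℂ H]

lemma aux_scalar_of_commute {u : H} (hu1 : ⟪u, u⟫ = 1) (T : H →L[ℂ] H)
    (hT : ∀ S : H →L[ℂ] H, T * S = S * T) : ∃ c : ℂ, T = c • 1 := by
  refine ⟨⟪u, T u⟫, ?_⟩
  ext v
  have h := congrArg (fun S : H →L[ℂ] H => S u) (hT ((innerSL ℂ u).smulRight v))
  simp only [ContinuousLinearMap.mul_apply, ContinuousLinearMap.smulRight_apply,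
    innerSL_apply_apply] at h
  rw [hu1, one_smul] at h
  simpa using h

noncomputable def auxP (e : ℕ → H) (k : ℕ) : H →L[ℂ] H := (innerSL ℂ (e k)).smulRight (e k)

lemma auxP_apply (e : ℕ → H) (k : ℕ) (v : H) : auxP e k v = ⟪e k, v⟫ • e k := rfl

lemma auxP_e {e : ℕ → H} (he : Orthonormal ℂ e) (k j : ℕ) :
    auxP e k (e j) = if k = j then e k else 0 := by
  rw [auxP_apply, orthonormal_iff_ite.mp he k j, ite_smul, one_smul, zero_smul]

lemma auxP_norm {e : ℕ → H} (he : Orthonormal ℂ e) (k : ℕ) : ‖auxP e k‖ ≤ 1 := by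
  refine ContinuousLinearMap.opNorm_le_bound _ zero_le_one (fun v => ?_)
  rw [auxP_apply, norm_smul, one_mul]
  calc ‖⟪e k, v⟫‖ * ‖e k‖ ≤ (‖e k‖ * ‖v‖) * ‖e k‖ := by
        gcongr; exact norm_inner_le_norm _ _
    _ = ‖v‖ := by rw [he.1 k]; ring

lemma auxP_sep {e : ℕ → H} (he : Orthonormal ℂ e) {k j : ℕ} (hkj : k ≠ j) :
    (1:ℝ) ≤ ‖auxP e k - auxP e j‖ := by
  have h := (auxP e k - auxP e j).le_opNorm (e k)
  rw [ContinuousLinearMap.sub_apply, auxP_e he k k, auxP_e he j k, if_pos rfl,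
    if_neg (Ne.symm hkj), sub_zero, he.1 k, mul_one] at h
  exact h

lemma aux_scalar_of_jordan {e : ℕ → H} (he : Orthonormal ℂ e) (W : H →L[ℂ] H)
    (hW : ∀ A B : H →L[ℂ] H, (W*A + A*W)*B + B*(W*A + A*W) = W*(A*B + B*A) + (A*B + B*A)*W) :
    ∃ c : ℂ, W = c • 1 := by
  have hee := orthonormal_iff_ite.mp he
  have hu1 : ⟪e 0, e 0⟫ = 1 := by simpa using hee 0 0
  have hvne : ∀ i, e i ≠ 0 := by
    intro i h
    have h2 := he.1 i
    rw [h, norm_zero] at h2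
    norm_num at h2
  have h2 : ∀ B : H →L[ℂ] H, ∃ c : ℂ, W*B - B*W = c • 1 :=
    fun B => aux_scalar_of_commute hu1 _ (fun S => aux_ring2 W S B (hW S B))
  have h3 : ∀ A : H →L[ℂ] H, W*A = A*W := by
    by_contra hcon
    push_neg at hcon
    obtain ⟨A₀, hA₀⟩ := hcon
    obtain ⟨c₀, hc₀⟩ := h2 A₀
    have hc₀ne : c₀ ≠ 0 := by
      rintro rfl
      rw [zero_smul, sub_eq_zero] at hc₀
      exact hA₀ hc₀
    have h4 : ∀ B : H →L[ℂ] H, ∃ α β : ℂ, c₀ • B = α • 1 + β • A₀ := by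
      intro B
      obtain ⟨cB, hcB⟩ := h2 B
      obtain ⟨c', hc'⟩ := h2 (A₀*B)
      have hid : W*(A₀*B) - (A₀*B)*W = (W*A₀ - A₀*W)*B + A₀*(W*B - B*W) := by noncomm_ring
      rw [hc', hc₀, hcB, smul_mul_assoc, one_mul, mul_smul_comm, mul_one] at hid
      refine ⟨c', -cB, ?_⟩
      rw [neg_smul, ← sub_eq_add_neg]
      exact eq_sub_iff_add_eq.mpr hid.symm
    obtain ⟨α₁, β₁, hP1⟩ := h4 (auxP e 1)
    obtain ⟨α₂, β₂, hP2⟩ := h4 (auxP e 2)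
    have helim : (β₂*c₀) • auxP e 1 - (β₁*c₀) • auxP e 2 = (β₂*α₁ - β₁*α₂) • 1 := by
      rw [mul_smul, mul_smul, hP1, hP2]
      module
    have happ : ∀ v : H, (β₂*c₀) • auxP e 1 v - (β₁*c₀) • auxP e 2 v = (β₂*α₁ - β₁*α₂) • v := by
      intro v
      have := congrArg (fun S : H →L[ℂ] H => S v) helim
      simpa using this
    have h5 := happ (e 1)
    have h6 := happ (e 2)
    have h7 := happ (e 3)
    rw [auxP_e he 1 1, auxP_e he 2 1, if_pos rfl, if_neg (by norm_num), smul_zero,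
      sub_zero] at h5
    rw [auxP_e he 1 2, auxP_e he 2 2, if_pos rfl, if_neg (by norm_num), smul_zero,
      zero_sub, ← neg_smul] at h6
    rw [auxP_e he 1 3, auxP_e he 2 3, if_neg (by norm_num), if_neg (by norm_num),
      smul_zero, smul_zero, sub_zero] at h7
    have hd : β₂*α₁ - β₁*α₂ = 0 := by
      have := aux_smul_cancel (hvne 3) ((zero_smul ℂ (e 3)) ▸ h7)
      exact this.symm
    have hβ₂ : β₂ = 0 := by
      have h8 : β₂ * c₀ = β₂*α₁ - β₁*α₂ := aux_smul_cancel (hvne 1) h5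
      rw [hd] at h8
      rcases mul_eq_zero.mp h8 with h | h
      · exact h
      · exact absurd h hc₀ne
    have hβ₁ : β₁ = 0 := by
      have h8 : -(β₁ * c₀) = β₂*α₁ - β₁*α₂ := aux_smul_cancel (hvne 2) h6
      rw [hd, neg_eq_zero] at h8
      rcases mul_eq_zero.mp h8 with h | h
      · exact h
      · exact absurd h hc₀ne
    rw [hβ₁, zero_smul, add_zero] at hP1
    -- c₀ • auxP e 1 = α₁ • 1 ; evaluate at e 1 and e 2
    have h9 := congrArg (fun S : H →L[ℂ] H => S (e 1)) hP1
    have h10 := congrArg (fun S : H →L[ℂ] H => S (e 2)) hP1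
    simp only [ContinuousLinearMap.smul_apply, ContinuousLinearMap.one_apply] at h9 h10
    rw [auxP_e he 1 1, if_pos rfl] at h9
    rw [auxP_e he 1 2, if_neg (by norm_num), smul_zero] at h10
    have hα₁ : α₁ = 0 := by
      have := aux_smul_cancel (hvne 2) ((zero_smul ℂ (e 2)) ▸ h10)
      exact this.symm
    have : c₀ = α₁ := aux_smul_cancel (hvne 1) h9
    rw [hα₁] at this
    exact hc₀ne this
  obtain ⟨c, hc⟩ := aux_scalar_of_commute hu1 W h3
  exact ⟨c, hc⟩

end Hilbert

lemma aux_exists_orthonormal_seq {H : Type*} [NormedAddCommGroup H] [InnerProductSpace ℂ H]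
    [CompleteSpace H] (hinf : ¬ FiniteDimensional ℂ H) : ∃ e : ℕ → H, Orthonormal ℂ e := by
  obtain ⟨w, b, hb⟩ := exists_hilbertBasis ℂ H
  have hwinf : w.Infinite := by
    by_contra h
    rw [Set.not_infinite] at h
    have hd := b.dense_span
    rw [hb, Subtype.range_coe] at hd
    have hfd : FiniteDimensional ℂ (Submodule.span ℂ w) := FiniteDimensional.span_of_finite ℂ h
    have hcl : IsClosed ((Submodule.span ℂ w : Submodule ℂ H) : Set H) :=
      Submodule.closed_of_finiteDimensional _
    rw [hcl.submodule_topologicalClosure_eq] at hd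
    rw [hd] at hfd
    exact hinf (Submodule.topEquiv.finiteDimensional)
  have hbo := b.orthonormal
  rw [hb] at hbo
  exact ⟨_, hbo.comp _ (Set.Infinite.natEmbedding w hwinf).injective⟩

lemma aux_polar {R S : Type*} [Ring R] [Ring S] [Module ℂ R] [Module ℂ S]
    (Φ : R →ₗ[ℂ] S) (hsq : ∀ x, Φ (x*x) = Φ x * Φ x) (x y : R) :
    Φ (x*y + y*x) = Φ x * Φ y + Φ y * Φ x := by
  have h := hsq (x + y)
  have e1 : (x+y)*(x+y) = x*x + (x*y + y*x) + y*y := by noncomm_ring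
  have e2 : (Φ x + Φ y)*(Φ x + Φ y) = Φ x*Φ x + (Φ x*Φ y + Φ y*Φ x) + Φ y*Φ y := by noncomm_ring
  rw [map_add, e2, e1, map_add, map_add, hsq x, hsq y] at h
  exact add_left_cancel (add_right_cancel h)

lemma aux_half {M : Type*} [AddCommGroup M] [Module ℂ M] {a b : M}
    (h : a + a = b + b) : a = b := by
  have h2 : (2:ℂ) • a = (2:ℂ) • b := by rw [two_smul, two_smul]; exact h
  have h3 := congrArg (fun m : M => (2:ℂ)⁻¹ • m) h2
  simpa [smul_smul, inv_mul_cancel₀ (two_ne_zero' ℂ)] using h3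

set_option maxHeartbeats 1000000 in
/-- Let `H` be a complex separable infinite-dimensional Hilbert space. There
is no Jordan isomorphism (bijective complex-linear map `Φ` with `Φ(x²) = Φ(x)²`) from
`ℓ∞(ℕ, B(H))` onto `C(βℕ, B(H))`; in particular these C*-algebras are not isomorphic even
as Jordan algebras. -/
theorem no_jordan_isomorphism_linfty_to_continuous_stoneCech
    {H : Type*} [NormedAddCommGroup H] [InnerProductSpace ℂ H] [CompleteSpace H]
    [TopologicalSpace.SeparableSpace H] [Nontrivial H]
    (hinf : ¬ FiniteDimensional ℂ H) :
    ¬ ∃ Φ : lp (fun _ : ℕ => H →L[ℂ] H) ∞ →ₗ[ℂ] C(StoneCech ℕ, H →L[ℂ] H),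
        Function.Bijective Φ ∧ ∀ x, Φ (x * x) = Φ x * Φ x := by
  classical
  rintro ⟨Φ, ⟨hinj, hsurj⟩, hsq⟩
  obtain ⟨e, he⟩ := aux_exists_orthonormal_seq (H := H) hinf
  have hu1 : ⟪e 0, e 0⟫ = 1 := by simpa using orthonormal_iff_ite.mp he 0 0
  have hone_ne : (1 : H →L[ℂ] H) ≠ 0 := by
    intro h0
    have h1 := congrArg (fun T : H →L[ℂ] H => T (e 0)) h0
    simp only [ContinuousLinearMap.one_apply, ContinuousLinearMap.zero_apply] at h1
    have := he.1 0
    rw [h1, norm_zero] at this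
    norm_num at this
  -- the minimal central idempotents of ℓ∞
  set z : ℕ → lp (fun _ : ℕ => H →L[ℂ] H) ∞ := fun k => lp.single ∞ k 1 with hzdef
  have hco : ∀ (f g : lp (fun _ : ℕ => H →L[ℂ] H) ∞) (j : ℕ), (f * g) j = f j * g j := by
    intro f g j
    rw [lp.infty_coeFn_mul]
    rfl
  have hzap : ∀ k j, (z k : ∀ _ : ℕ, H →L[ℂ] H) j = if j = k then 1 else 0 := by
    intro k j
    by_cases h : j = k
    · subst h; rw [if_pos rfl]; exact lp.single_apply_self ∞ j 1
    · rw [if_neg h]; exact lp.single_apply_ne ∞ k 1 h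
  have hzc : ∀ k (x : lp (fun _ : ℕ => H →L[ℂ] H) ∞), z k * x = x * z k := by
    intro k x
    apply lp.ext
    funext j
    rw [hco, hco, hzap]
    by_cases h : j = k
    · rw [if_pos h, one_mul, mul_one]
    · rw [if_neg h, zero_mul, mul_zero]
  have hzz : ∀ k, z k * z k = z k := by
    intro k
    apply lp.ext
    funext j
    rw [hco, hzap]
    by_cases h : j = k
    · rw [if_pos h, one_mul]
    · rw [if_neg h, zero_mul]
  have hzzo : ∀ k m, k ≠ m → z k * z m = 0 := by
    intro k m hkm
    apply lp.ext
    funext j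
    rw [hco, hzap, hzap]
    by_cases h : j = k
    · rw [if_pos h, if_neg (fun hm => hkm (by rw [← h, hm])), mul_zero]
      simp
    · rw [if_neg h, zero_mul]
      simp
  have hJ : ∀ x y : lp (fun _ : ℕ => H →L[ℂ] H) ∞,
      Φ (x*y + y*x) = Φ x * Φ y + Φ y * Φ x := aux_polar Φ hsq
  -- transfer of the Jordan-associativity witnessing centrality
  have hCj : ∀ k (x' y' : C(StoneCech ℕ, H →L[ℂ] H)),
      (Φ (z k)*x' + x'*Φ (z k))*y' + y'*(Φ (z k)*x' + x'*Φ (z k))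
        = Φ (z k)*(x'*y' + y'*x') + (x'*y' + y'*x')*Φ (z k) := by
    intro k x' y'
    obtain ⟨x, rfl⟩ := hsurj x'
    obtain ⟨y, rfl⟩ := hsurj y'
    calc (Φ (z k)*Φ x + Φ x*Φ (z k))*Φ y + Φ y*(Φ (z k)*Φ x + Φ x*Φ (z k))
        = Φ ((z k*x + x*z k)*y + y*(z k*x + x*z k)) := by
          rw [hJ (z k*x + x*z k) y, hJ (z k) x]
      _ = Φ (z k*(x*y + y*x) + (x*y + y*x)*z k) := by
          rw [aux_ring1 (z k) x y (hzc k y)]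
      _ = Φ (z k)*(Φ x*Φ y + Φ y*Φ x) + (Φ x*Φ y + Φ y*Φ x)*Φ (z k) := by
          rw [hJ (z k) (x*y + y*x), hJ x y]
  have hwscal : ∀ k t, ∃ c : ℂ, Φ (z k) t = c • 1 := by
    intro k t
    apply aux_scalar_of_jordan he
    intro A B
    have h := hCj k (ContinuousMap.const _ A) (ContinuousMap.const _ B)
    have h2 := congrArg (fun f : C(StoneCech ℕ, H →L[ℂ] H) => f t) h
    simpa only [ContinuousMap.mul_apply, ContinuousMap.add_apply,
      ContinuousMap.const_apply] using h2
  have hw2 : ∀ k, Φ (z k) * Φ (z k) = Φ (z k) := by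
    intro k
    rw [← hsq (z k), hzz k]
  have hw01 : ∀ k t, Φ (z k) t = 0 ∨ Φ (z k) t = 1 := by
    intro k t
    obtain ⟨c, hc⟩ := hwscal k t
    have h := congrArg (fun f : C(StoneCech ℕ, H →L[ℂ] H) => f t) (hw2 k)
    simp only [ContinuousMap.mul_apply] at h
    rw [hc] at h
    have hcc : (c*c) • (1 : H →L[ℂ] H) = c • 1 := by
      rw [← smul_smul]
      rw [smul_mul_assoc, one_mul] at h
      exact h
    have hc2 : c * c = c := by
      have h9 := congrArg (fun T : H →L[ℂ] H => T (e 0)) hcc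
      simp only [ContinuousLinearMap.smul_apply, ContinuousLinearMap.one_apply] at h9
      apply aux_smul_cancel (v := e 0) ?_ h9
      intro h0
      have := he.1 0
      rw [h0, norm_zero] at this
      norm_num at this
    have : c * (c - 1) = 0 := by rw [mul_sub, mul_one, hc2, sub_self]
    rcases mul_eq_zero.mp this with h0 | h0
    · left; rw [hc, h0, zero_smul]
    · right; rw [hc, sub_eq_zero.mp h0, one_smul]
  have hwc : ∀ k (h' : C(StoneCech ℕ, H →L[ℂ] H)), Φ (z k) * h' = h' * Φ (z k) := by
    intro k h'
    apply ContinuousMap.ext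
    intro t
    rw [ContinuousMap.mul_apply, ContinuousMap.mul_apply]
    rcases hw01 k t with h | h
    · rw [h, zero_mul, mul_zero]
    · rw [h, one_mul, mul_one]
  have hortho : ∀ k m, k ≠ m → Φ (z k) * Φ (z m) = 0 := by
    intro k m hkm
    have h := hJ (z k) (z m)
    rw [hzzo k m hkm, hzzo m k (Ne.symm hkm), add_zero, map_zero] at h
    rw [← hwc k (Φ (z m))] at h
    exact (aux_half (a := Φ (z k) * Φ (z m)) (b := 0) (by rw [add_zero]; exact h.symm)).symm ▸ rfl
  have hmul : ∀ k (v : lp (fun _ : ℕ => H →L[ℂ] H) ∞), Φ (z k * v) = Φ (z k) * Φ v := by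
    intro k v
    have h := hJ (z k) v
    rw [← hzc k v, map_add, ← hwc k (Φ v)] at h
    exact aux_half h
  -- a point where the k-th central idempotent is 1
  have ht : ∀ k, ∃ t, Φ (z k) t = 1 := by
    intro k
    have hzne : z k ≠ 0 := by
      intro h0
      have h1 := congrArg (fun v : lp (fun _ : ℕ => H →L[ℂ] H) ∞ => (v : ∀ _ : ℕ, H →L[ℂ] H) k) h0
      simp only at h1
      rw [hzap k k, if_pos rfl] at h1
      exact hone_ne (by simpa using h1)
    have hwne : Φ (z k) ≠ 0 := by
      intro h0
      exact hzne (hinj (by rw [h0, map_zero]))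
    have : ∃ t, Φ (z k) t ≠ 0 := by
      by_contra hcon
      push_neg at hcon
      exact hwne (ContinuousMap.ext fun t => by rw [hcon t]; rfl)
    obtain ⟨t, htne⟩ := this
    rcases hw01 k t with h | h
    · exact absurd h htne
    · exact ⟨t, h⟩
  choose t htk using ht
  -- the test functions
  set gK : ℕ → C(StoneCech ℕ, H →L[ℂ] H) :=
    fun k => Φ (z k) * ContinuousMap.const _ (auxP e k) with hgKdef
  have hgKapp : ∀ k s, gK k s = Φ (z k) s * auxP e k := by
    intro k s
    rw [hgKdef]
    simp only [ContinuousMap.mul_apply, ContinuousMap.const_apply]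
  have hgKnorm : ∀ k s, ‖gK k s‖ ≤ 1 := by
    intro k s
    rw [hgKapp]
    rcases hw01 k s with h | h
    · rw [h, zero_mul, norm_zero]; norm_num
    · rw [h, one_mul]; exact auxP_norm he k
  have hgK1 : ∀ k, Φ (z k) * gK k = gK k := by
    intro k
    rw [hgKdef]
    simp only
    rw [← mul_assoc, hw2 k]
  have hgK0 : ∀ k m, k ≠ m → Φ (z k) * gK m = 0 := by
    intro k m hkm
    rw [hgKdef]
    simp only
    rw [← mul_assoc, hortho k m hkm, zero_mul]
  -- the inverse of Φ
  set Φeq := LinearEquiv.ofBijective Φ ⟨hinj, hsurj⟩ with hΦeqdef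
  have hΦinv : ∀ y, Φ (Φeq.symm y) = y := by
    intro y
    have := Φeq.apply_symm_apply y
    exact this
  set a : ℕ → (H →L[ℂ] H) := fun k => (Φeq.symm (gK k) : ∀ _ : ℕ, H →L[ℂ] H) k with hadef
  have hBsupp : ∀ k j, j ≠ k → (Φeq.symm (gK k) : ∀ _ : ℕ, H →L[ℂ] H) j = 0 := by
    intro k j hjk
    have h1 : Φ (z j * Φeq.symm (gK k)) = 0 := by
      rw [hmul, hΦinv, hgK0 j k hjk]
    have h2 : z j * Φeq.symm (gK k) = 0 := hinj (by rw [h1, map_zero])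
    have h3 := congrArg (fun v : lp (fun _ : ℕ => H →L[ℂ] H) ∞ => (v : ∀ _ : ℕ, H →L[ℂ] H) j) h2
    simp only at h3
    rw [hco, hzap, if_pos rfl, one_mul] at h3
    simpa using h3
  -- Step: the sequence (a k) is bounded
  have hbdd : BddAbove (Set.range fun k => ‖a k‖) := by
    by_contra hnb
    have hA : ∀ C : ℝ, ∃ k, C < ‖a k‖ := by
      intro C
      by_contra hcc
      push_neg at hcc
      exact hnb ⟨C, by rintro r ⟨k, rfl⟩; exact hcc k⟩
    choose F hF using hA
    obtain ⟨f, hfe0, hfes⟩ : ∃ f : ℕ → ℕ, f 0 = F 1 ∧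
        ∀ m, f (m+1) = F ((4:ℝ)^(m+1) + ‖a (f m)‖) :=
      ⟨fun n => Nat.rec (F 1) (fun m prev => F ((4:ℝ)^(m+1) + ‖a prev‖)) n, rfl, fun m => rfl⟩
    have hfp : ∀ m, (4:ℝ)^m < ‖a (f m)‖ := by
      intro m
      cases m with
      | zero => rw [hfe0, pow_zero]; exact hF 1
      | succ m =>
        rw [hfes m]
        have h1 := hF ((4:ℝ)^(m+1) + ‖a (f m)‖)
        have h2 := norm_nonneg (a (f m))
        linarith
    have hfmono : StrictMono fun m => ‖a (f m)‖ := by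
      apply strictMono_nat_of_lt_succ
      intro m
      rw [hfes m]
      have h1 := hF ((4:ℝ)^(m+1) + ‖a (f m)‖)
      have h4 : (0:ℝ) ≤ 4^(m+1) := by positivity
      linarith
    have hfinj : Function.Injective f := by
      intro i j hij
      exact hfmono.injective (show ‖a (f i)‖ = ‖a (f j)‖ by rw [hij])
    have hgeom : Summable (fun i : ℕ => (2:ℝ)⁻¹ ^ i) :=
      summable_geometric_of_lt_one (by norm_num) (by norm_num)
    have hcnorm : ∀ i : ℕ, ‖((2:ℂ)⁻¹)^i‖ = (2:ℝ)⁻¹^i := by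
      intro i
      rw [norm_pow, norm_inv]
      norm_num
    have hterm : ∀ (i : ℕ) (s : StoneCech ℕ), ‖((2:ℂ)⁻¹)^i • gK (f i) s‖ ≤ (2:ℝ)⁻¹^i := by
      intro i s
      rw [norm_smul, hcnorm]
      calc (2:ℝ)⁻¹^i * ‖gK (f i) s‖ ≤ (2:ℝ)⁻¹^i * 1 := by
            gcongr
            exact hgKnorm _ s
        _ = (2:ℝ)⁻¹^i := mul_one _
    have hsumm : ∀ s, Summable fun i => ((2:ℂ)⁻¹)^i • gK (f i) s := fun s =>
      Summable.of_norm_bounded hgeom (fun i => hterm i s)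
    have hcont : Continuous fun s : StoneCech ℕ => ∑' i, ((2:ℂ)⁻¹)^i • gK (f i) s := by
      apply continuous_tsum ?_ hgeom ?_
      · intro i
        exact (continuous_const (y := ((2:ℂ)⁻¹)^i)).smul (gK (f i)).continuous
      · intro i s
        exact hterm i s
    set g : C(StoneCech ℕ, H →L[ℂ] H) := ⟨fun s => ∑' i, ((2:ℂ)⁻¹)^i • gK (f i) s, hcont⟩
      with hgdef
    have hgapp : ∀ s, g s = ∑' i, ((2:ℂ)⁻¹)^i • gK (f i) s := fun s => rfl
    have hwg : ∀ i, Φ (z (f i)) * g = ((2:ℂ)⁻¹)^i • gK (f i) := by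
      intro i
      apply ContinuousMap.ext
      intro s
      rw [ContinuousMap.mul_apply, hgapp, ContinuousMap.smul_apply]
      have hmt := (ContinuousLinearMap.mul ℂ (H →L[ℂ] H) (Φ (z (f i)) s)).map_tsum (hsumm s)
      simp only [ContinuousLinearMap.mul_apply'] at hmt
      rw [hmt, tsum_eq_single i ?_]
      · rw [mul_smul_comm]
        congr 1
        have h9 := congrArg (fun q : C(StoneCech ℕ, H →L[ℂ] H) => q s) (hgK1 (f i))
        simpa only [ContinuousMap.mul_apply] using h9
      · intro j hj
        have hz0 : Φ (z (f i)) s * gK (f j) s = 0 := by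
          have h9 := congrArg (fun q : C(StoneCech ℕ, H →L[ℂ] H) => q s)
            (hgK0 (f i) (f j) (fun hh => hj (hfinj hh).symm))
          simpa only [ContinuousMap.mul_apply, ContinuousMap.zero_apply] using h9
        rw [mul_smul_comm, hz0, smul_zero]
    have hzg : ∀ i, z (f i) * Φeq.symm g = ((2:ℂ)⁻¹)^i • Φeq.symm (gK (f i)) := by
      intro i
      apply hinj
      rw [hmul, hΦinv, hwg i, map_smul, hΦinv]
    have hnormle : ∀ i : ℕ, (2:ℝ)^i ≤ ‖Φeq.symm g‖ := by
      intro i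
      have h3 := congrArg
        (fun v : lp (fun _ : ℕ => H →L[ℂ] H) ∞ => (v : ∀ _ : ℕ, H →L[ℂ] H) (f i)) (hzg i)
      simp only at h3
      rw [hco, hzap, if_pos rfl, one_mul] at h3
      have h4 : ((((2:ℂ)⁻¹)^i • Φeq.symm (gK (f i)) : lp (fun _ : ℕ => H →L[ℂ] H) ∞) :
          ∀ _ : ℕ, H →L[ℂ] H) (f i) = ((2:ℂ)⁻¹)^i • a (f i) := by
        rw [lp.coeFn_smul]
        rfl
      rw [h4] at h3
      have h5 : ‖(Φeq.symm g : ∀ _ : ℕ, H →L[ℂ] H) (f i)‖ = (2:ℝ)⁻¹^i * ‖a (f i)‖ := by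
        rw [h3, norm_smul, hcnorm]
      have h6 := lp.norm_apply_le_norm ENNReal.top_ne_zero (Φeq.symm g) (f i)
      rw [h5] at h6
      have h7 : (2:ℝ)^i = (2:ℝ)⁻¹^i * (4:ℝ)^i := by
        rw [← mul_pow]
        norm_num
      have h8 : (2:ℝ)⁻¹^i * (4:ℝ)^i ≤ (2:ℝ)⁻¹^i * ‖a (f i)‖ := by
        gcongr
        exact (hfp i).le
      linarith
    obtain ⟨n, hn⟩ := pow_unbounded_of_one_lt ‖Φeq.symm g‖ (one_lt_two (α := ℝ))
    exact absurd (hnormle n) (not_le.mpr hn)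
  -- assemble the bounded sequence into an element of ℓ∞
  set x : lp (fun _ : ℕ => H →L[ℂ] H) ∞ := ⟨fun k => a k, memℓp_infty hbdd⟩ with hxdef
  have hzx : ∀ k, z k * x = Φeq.symm (gK k) := by
    intro k
    apply lp.ext
    funext j
    rw [hco, hzap]
    by_cases h : j = k
    · subst h
      rw [if_pos rfl, one_mul]
    · rw [if_neg h, zero_mul]
      exact (hBsupp k j h).symm
  have hyv : ∀ k, (Φ x) (t k) = auxP e k := by
    intro k
    have hk : Φ (z k) * Φ x = gK k := by rw [← hmul, hzx, hΦinv]
    have h := congrArg (fun q : C(StoneCech ℕ, H →L[ℂ] H) => q (t k)) hk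
    simp only [ContinuousMap.mul_apply] at h
    rw [htk k, one_mul] at h
    rw [h, hgKapp, htk k, one_mul]
  have hcomp : IsCompact (Set.range (Φ x)) := isCompact_range (Φ x).continuous
  obtain ⟨L, -, φtail, hφ, hconv⟩ :=
    hcomp.tendsto_subseq (x := fun k => auxP e k) (fun k => ⟨t k, hyv k⟩)
  rw [Metric.tendsto_atTop] at hconv
  obtain ⟨N, hN⟩ := hconv (1/2) (by norm_num)
  have h1 := hN N le_rfl
  have h2 := hN (N+1) (Nat.le_succ N)
  simp only [Function.comp_apply] at h1 h2
  have hne : φtail N ≠ φtail (N+1) := fun hh => (Nat.lt_succ_self N).ne (hφ.injective hh)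
  have hsep := auxP_sep he hne
  have hd : dist (auxP e (φtail N)) (auxP e (φtail (N+1))) < 1 := by
    calc dist (auxP e (φtail N)) (auxP e (φtail (N+1)))
        ≤ dist (auxP e (φtail N)) L + dist L (auxP e (φtail (N+1))) := dist_triangle _ _ _
      _ < 1/2 + 1/2 := by
          rw [dist_comm L]
          exact add_lt_add h1 h2
      _ = 1 := by norm_num
  rw [dist_eq_norm] at hd
  linarith
end

section
/- Let Φ : ℓ∞(ℕ, B(H)) → ℓ∞(ℕ, B(H)) be an algebra automorphism (a bijective multiplicative complex-linear map). Then there are algebra automorphisms φ_n of B(H) (n ∈ ℕ) and a bijection φ : ℕ → ℕ such that Φ((A_k)_k) = (φ_n(A_{φ(n)}))_n for every (A_k)_k ∈ ℓ∞(ℕ, B(H)). -/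
open scoped ENNReal

namespace AutLinftyAux
noncomputable section
set_option linter.unusedSectionVars false
set_option maxHeartbeats 1000000
set_option synthInstance.maxHeartbeats 1000000

variable {H : Type*} [NormedAddCommGroup H] [InnerProductSpace ℂ H] [CompleteSpace H]

local notation "𝓛" => lp (fun _ : ℕ => H →L[ℂ] H) ∞

lemma one_ne_zero' [Nontrivial H] : (1 : H →L[ℂ] H) ≠ 0 := by
  obtain ⟨v, hv⟩ := exists_ne (0 : H)
  intro h
  exact hv (by calc v = (1 : H →L[ℂ] H) v := rfl
    _ = (0 : H →L[ℂ] H) v := by rw [h]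
    _ = 0 := rfl)

lemma central_scalar [Nontrivial H] (T : H →L[ℂ] H)
    (h : ∀ A : H →L[ℂ] H, A * T = T * A) : ∃ c : ℂ, T = c • 1 := by
  obtain ⟨v, hv⟩ := exists_ne (0 : H)
  have hvv : (inner ℂ v v : ℂ) ≠ 0 := (inner_self_ne_zero (𝕜 := ℂ)).2 hv
  refine ⟨(inner ℂ v (T v) : ℂ) / (inner ℂ v v : ℂ), ?_⟩
  ext x
  have hA := congrArg (fun S : H →L[ℂ] H => S v) (h ((innerSL ℂ v).smulRight x))
  simp only [ContinuousLinearMap.mul_apply, ContinuousLinearMap.smulRight_apply,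
    innerSL_apply_apply, map_smul] at hA
  have key : ((inner ℂ v v : ℂ)⁻¹) • ((inner ℂ v (T v) : ℂ) • x) = T x := by
    rw [hA, smul_smul, inv_mul_cancel₀ hvv, one_smul]
  rw [← key, smul_smul, div_eq_inv_mul]
  rfl

def ind (S : Set ℕ) : lp (fun _ : ℕ => H →L[ℂ] H) ∞ :=
  ⟨S.indicator (fun _ => (1 : H →L[ℂ] H)), memℓp_infty ⟨1, by
    rintro - ⟨n, rfl⟩
    by_cases h : n ∈ S
    · simpa [Set.indicator_of_mem h, ContinuousLinearMap.one_def] using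
        ContinuousLinearMap.norm_id_le
    · simp [Set.indicator_of_notMem h]⟩⟩

open Classical in
lemma ind_apply (S : Set ℕ) (n : ℕ) :
    (ind (H := H) S : ∀ _ : ℕ, H →L[ℂ] H) n = if n ∈ S then 1 else 0 :=
  Set.indicator_apply S (fun _ => (1 : H →L[ℂ] H)) n

def sing (k : ℕ) (A : H →L[ℂ] H) : lp (fun _ : ℕ => H →L[ℂ] H) ∞ :=
  ⟨fun m => if m = k then A else 0, memℓp_infty ⟨‖A‖, by
    rintro - ⟨m, rfl⟩
    dsimp only
    split <;> simp⟩⟩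

lemma sing_apply (k : ℕ) (A : H →L[ℂ] H) (m : ℕ) :
    (sing k A : ∀ _ : ℕ, H →L[ℂ] H) m = if m = k then A else 0 := rfl

lemma mul_apply (x y : lp (fun _ : ℕ => H →L[ℂ] H) ∞) (n : ℕ) :
    ((x * y : 𝓛) : ∀ _ : ℕ, H →L[ℂ] H) n = (x : ∀ _, H →L[ℂ] H) n * (y : ∀ _, H →L[ℂ] H) n := by
  rw [lp.infty_coeFn_mul]; rfl

lemma ind_mul (S T : Set ℕ) : (ind S * ind T : 𝓛) = ind (S ∩ T) := by
  classical
  apply lp.ext; funext n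
  rw [mul_apply, ind_apply, ind_apply, ind_apply]
  by_cases hS : n ∈ S <;> by_cases hT : n ∈ T <;> simp [hS, hT]

lemma ind_central (S : Set ℕ) (y : 𝓛) : (ind S * y : 𝓛) = y * ind S := by
  classical
  apply lp.ext; funext n
  rw [mul_apply, mul_apply, ind_apply]
  split <;> simp

lemma ind_inj [Nontrivial H] {S T : Set ℕ} (h : ind (H := H) S = ind T) : S = T := by
  classical
  have h1 : (1 : H →L[ℂ] H) ≠ 0 := one_ne_zero'
  ext n
  have this : (ind (H := H) S : ∀ _ : ℕ, H →L[ℂ] H) n = (ind T : ∀ _ : ℕ, H →L[ℂ] H) n := by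
    rw [h]
  rw [ind_apply, ind_apply] at this
  by_cases hS : n ∈ S <;> by_cases hT : n ∈ T <;> simp_all

lemma ind_empty : ind (H := H) ∅ = 0 := by
  apply lp.ext; funext n
  rw [ind_apply]
  simp [lp.coeFn_zero]

lemma mul_ind_singleton (x : 𝓛) (k : ℕ) :
    (x * ind {k} : 𝓛) = sing k ((x : ∀ _, H →L[ℂ] H) k) := by
  classical
  apply lp.ext; funext m
  rw [mul_apply, ind_apply, sing_apply]
  by_cases h : m = k <;> simp [h]

lemma sing_mul_sing (k : ℕ) (A B : H →L[ℂ] H) :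
    (sing k A * sing k B : 𝓛) = sing k (A * B) := by
  apply lp.ext; funext m
  rw [mul_apply, sing_apply, sing_apply, sing_apply]
  by_cases h : m = k <;> simp [h]

lemma sing_eq_zero {k : ℕ} {A : H →L[ℂ] H} (h : sing k A = 0) : A = 0 := by
  have this : (sing k A : ∀ _ : ℕ, H →L[ℂ] H) k = (0 : 𝓛) k := by rw [h]
  rw [sing_apply, lp.coeFn_zero] at this
  simpa using this

lemma sing_add (k : ℕ) (A B : H →L[ℂ] H) :
    sing k (A + B) = sing k A + sing k B := by
  apply lp.ext; funext m
  rw [lp.coeFn_add, Pi.add_apply, sing_apply, sing_apply, sing_apply]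
  split <;> simp

lemma sing_smul (k : ℕ) (c : ℂ) (A : H →L[ℂ] H) :
    sing k (c • A) = c • sing k A := by
  apply lp.ext; funext m
  rw [lp.coeFn_smul, Pi.smul_apply, sing_apply, sing_apply]
  split <;> simp

lemma central_idem [Nontrivial H] (x : 𝓛)
    (hc : ∀ y : 𝓛, x * y = y * x) (hi : x * x = x) : ∃ S : Set ℕ, x = ind S := by
  classical
  have hcoord : ∀ n, ∃ c : ℂ, (x : ∀ _, H →L[ℂ] H) n = c • 1 := by
    intro n
    apply central_scalar
    intro A
    have h := congrFun (congrArg (fun z : 𝓛 => (z : ∀ _ : ℕ, H →L[ℂ] H)) (hc (sing n A))) n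
    simp only [mul_apply, sing_apply] at h
    simpa using h.symm
  choose c hc' using hcoord
  have hidem : ∀ n, c n = 0 ∨ c n = 1 := by
    intro n
    have h := congrFun (congrArg (fun z : 𝓛 => (z : ∀ _ : ℕ, H →L[ℂ] H)) hi) n
    simp only [mul_apply, hc' n] at h
    have : (c n * c n) • (1 : H →L[ℂ] H) = c n • 1 := by
      rw [← h, smul_mul_assoc, mul_smul_comm, one_mul, smul_smul]
    have hcc : c n * c n = c n := by
      by_contra hne
      have := sub_eq_zero.2 this
      rw [← sub_smul, smul_eq_zero] at this
      rcases this with h0 | h0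
      · exact hne (sub_eq_zero.1 h0)
      · exact one_ne_zero' h0
    have hfac : c n * (c n - 1) = 0 := by ring_nf; linear_combination hcc
    rcases mul_eq_zero.1 hfac with h0 | h0
    · exact Or.inl h0
    · exact Or.inr (sub_eq_zero.1 h0)
  refine ⟨{n | (x : ∀ _, H →L[ℂ] H) n = 1}, ?_⟩
  apply lp.ext; funext n
  rw [ind_apply]
  rcases hidem n with h0 | h0
  · have hx0 : (x : ∀ _, H →L[ℂ] H) n = 0 := by rw [hc' n, h0, zero_smul]
    have : n ∉ {n | (x : ∀ _, H →L[ℂ] H) n = 1} := by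
      intro hn
      exact one_ne_zero' (by rw [← hn, hx0] : (1 : H →L[ℂ] H) = 0)
    rw [if_neg this, hx0]
  · have hx1 : (x : ∀ _, H →L[ℂ] H) n = 1 := by rw [hc' n, h0, one_smul]
    rw [if_pos (show n ∈ {n | (x : ∀ _, H →L[ℂ] H) n = 1} from hx1), hx1]

lemma image_singleton [Nontrivial H]
    (f g : (lp (fun _ : ℕ => H →L[ℂ] H) ∞) →ₗ[ℂ] (lp (fun _ : ℕ => H →L[ℂ] H) ∞))
    (hgf : ∀ x, g (f x) = x) (hfg : ∀ x, f (g x) = x)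
    (hf : ∀ x y, f (x * y) = f x * f y) (hg : ∀ x y, g (x * y) = g x * g y)
    (m : ℕ) : ∃ a : ℕ, f (ind {m}) = ind {a} := by
  have finj : Function.Injective f := fun a b h => by rw [← hgf a, h, hgf]
  have ginj : Function.Injective g := fun a b h => by rw [← hfg a, h, hfg]
  -- f (ind {m}) is a central idempotent
  have hfc : ∀ y : 𝓛, f (ind {m}) * y = y * f (ind {m}) := by
    intro y
    calc f (ind {m}) * y = f (ind {m}) * f (g y) := by rw [hfg]
    _ = f (ind {m} * g y) := (hf _ _).symm
    _ = f (g y * ind {m}) := by rw [ind_central]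
    _ = f (g y) * f (ind {m}) := hf _ _
    _ = y * f (ind {m}) := by rw [hfg]
  have hfi : f (ind {m}) * f (ind {m}) = f (ind {m}) := by
    rw [← hf, ind_mul, Set.inter_self]
  obtain ⟨S, hS⟩ := central_idem _ hfc hfi
  have hSne : S.Nonempty := by
    rcases Set.eq_empty_or_nonempty S with h | h
    · exfalso
      have : f (ind {m}) = f 0 := by rw [hS, h, ind_empty, map_zero]
      have h2 : ind (H := H) {m} = ind ∅ := by rw [finj this, ind_empty]
      have := ind_inj (H := H) h2
      simp [Set.eq_empty_iff_forall_notMem] at this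
    · exact h
  obtain ⟨a, ha⟩ := hSne
  -- w := g (ind {a}) is a central idempotent, say ind T
  have hgc : ∀ y : 𝓛, g (ind {a}) * y = y * g (ind {a}) := by
    intro y
    calc g (ind {a}) * y = g (ind {a}) * g (f y) := by rw [hgf]
    _ = g (ind {a} * f y) := (hg _ _).symm
    _ = g (f y * ind {a}) := by rw [ind_central]
    _ = g (f y) * g (ind {a}) := hg _ _
    _ = y * g (ind {a}) := by rw [hgf]
  have hgi : g (ind {a}) * g (ind {a}) = g (ind {a}) := by
    rw [← hg, ind_mul, Set.inter_self]
  obtain ⟨T, hT⟩ := central_idem _ hgc hgi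
  -- T ⊆ {m}
  have hTm : T ⊆ {m} := by
    have h1 : f (g (ind {a}) * ind {m}) = f (g (ind {a})) := by
      rw [hf, hfg, hS, ind_mul, Set.inter_eq_self_of_subset_left (Set.singleton_subset_iff.2 ha)]
    have h2 : g (ind (H := H) {a}) * ind {m} = g (ind {a}) := finj h1
    rw [hT, ind_mul] at h2
    have := ind_inj (H := H) h2
    rw [← this]
    exact Set.inter_subset_right
  -- T nonempty
  have hTne : T.Nonempty := by
    rcases Set.eq_empty_or_nonempty T with h | h
    · exfalso
      have : g (ind {a}) = g 0 := by rw [hT, h, ind_empty, map_zero]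
      have h2 : ind (H := H) {a} = ind ∅ := by rw [ginj this, ind_empty]
      have := ind_inj (H := H) h2
      simp [Set.eq_empty_iff_forall_notMem] at this
    · exact h
  have hTeq : T = {m} := by
    rcases Set.subset_singleton_iff_eq.1 hTm with h | h
    · exact absurd h (Set.nonempty_iff_ne_empty.1 hTne)
    · exact h
  refine ⟨a, ?_⟩
  have : g (ind {a}) = ind {m} := by rw [hT, hTeq]
  rw [← this, hfg]

end
end AutLinftyAux

open AutLinftyAux in
set_option maxHeartbeats 1000000 in
set_option synthInstance.maxHeartbeats 1000000 in
set_option linter.unusedVariables false in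
/-- Let `H` be a complex separable infinite-dimensional Hilbert space and let
`Φ : ℓ∞(ℕ, B(H)) → ℓ∞(ℕ, B(H))` be an algebra automorphism (a bijective multiplicative
complex-linear map). Then there are algebra automorphisms `φ_n` of `B(H)` (`n ∈ ℕ`) and a
bijection `φ : ℕ → ℕ` such that `Φ((A_k)_k) = (φ_n(A_{φ(n)}))_n`. -/
theorem automorphism_of_linfty_form
    {H : Type*} [NormedAddCommGroup H] [InnerProductSpace ℂ H] [CompleteSpace H]
    [TopologicalSpace.SeparableSpace H] [Nontrivial H]
    (hinf : ¬ FiniteDimensional ℂ H)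
    (Φ : lp (fun _ : ℕ => H →L[ℂ] H) ∞ →ₗ[ℂ] lp (fun _ : ℕ => H →L[ℂ] H) ∞)
    (hbij : Function.Bijective Φ)
    (hmul : ∀ x y, Φ (x * y) = Φ x * Φ y) :
    ∃ (ψ : ℕ → ((H →L[ℂ] H) →ₗ[ℂ] (H →L[ℂ] H))) (e : ℕ ≃ ℕ),
      (∀ n, Function.Bijective (ψ n) ∧ ∀ A B : H →L[ℂ] H, ψ n (A * B) = ψ n A * ψ n B) ∧
      ∀ (x : lp (fun _ : ℕ => H →L[ℂ] H) ∞) (n : ℕ),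
        (Φ x : ∀ _ : ℕ, H →L[ℂ] H) n = ψ n ((x : ∀ _ : ℕ, H →L[ℂ] H) (e n)) := by
  classical
  set Eq1 := LinearEquiv.ofBijective Φ hbij with hEq1
  let Φinv : lp (fun _ : ℕ => H →L[ℂ] H) ∞ →ₗ[ℂ] lp (fun _ : ℕ => H →L[ℂ] H) ∞ :=
    (Eq1.symm : _ →ₗ[ℂ] _)
  have hgf : ∀ x, Φinv (Φ x) = x := fun x => Eq1.symm_apply_apply x
  have hfg : ∀ x, Φ (Φinv x) = x := fun x => Eq1.apply_symm_apply x
  have hΦinj : Function.Injective Φ := hbij.1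
  have hgmul : ∀ x y, Φinv (x * y) = Φinv x * Φinv y := by
    intro x y
    apply hΦinj
    rw [hfg, hmul, hfg, hfg]
  choose σ hσ using fun m => image_singleton Φ Φinv hgf hfg hmul hgmul m
  choose σ' hσ' using fun m => image_singleton Φinv Φ hfg hgf hgmul hmul m
  have hσσ' : ∀ n, σ (σ' n) = n := by
    intro n
    have h : Φ (Φinv (ind {n})) = ind {n} := hfg _
    rw [hσ' n, hσ (σ' n)] at h
    exact (Set.singleton_eq_singleton_iff.1 (ind_inj (H := H) h))
  have hσ'σ : ∀ m, σ' (σ m) = m := by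
    intro m
    have h : Φinv (Φ (ind {m})) = ind {m} := hgf _
    rw [hσ m, hσ' (σ m)] at h
    exact (Set.singleton_eq_singleton_iff.1 (ind_inj (H := H) h))
  let e : ℕ ≃ ℕ := ⟨σ', σ, hσσ', hσ'σ⟩
  have hen : ∀ n, σ (e n) = n := fun n => hσσ' n
  let ψ : ℕ → ((H →L[ℂ] H) →ₗ[ℂ] (H →L[ℂ] H)) := fun n =>
    { toFun := fun A => (Φ (sing (e n) A) : ∀ _ : ℕ, H →L[ℂ] H) n
      map_add' := fun A B => by
        show (Φ (sing (e n) (A + B)) : ∀ _ : ℕ, H →L[ℂ] H) n =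
          (Φ (sing (e n) A) : ∀ _ : ℕ, H →L[ℂ] H) n + (Φ (sing (e n) B) : ∀ _ : ℕ, H →L[ℂ] H) n
        rw [sing_add, map_add, lp.coeFn_add, Pi.add_apply]
      map_smul' := fun c A => by
        show (Φ (sing (e n) (c • A)) : ∀ _ : ℕ, H →L[ℂ] H) n =
          c • (Φ (sing (e n) A) : ∀ _ : ℕ, H →L[ℂ] H) n
        rw [sing_smul, map_smul, lp.coeFn_smul, Pi.smul_apply] }
  have ψdef : ∀ n A, ψ n A = (Φ (sing (e n) A) : ∀ _ : ℕ, H →L[ℂ] H) n := fun n A => rfl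
  have key : ∀ (x : lp (fun _ : ℕ => H →L[ℂ] H) ∞) (n : ℕ),
      (Φ x : ∀ _ : ℕ, H →L[ℂ] H) n = ψ n ((x : ∀ _ : ℕ, H →L[ℂ] H) (e n)) := by
    intro x n
    rw [ψdef]
    have h1 : Φ (sing (e n) ((x : ∀ _ : ℕ, H →L[ℂ] H) (e n))) = Φ x * ind {n} := by
      rw [← mul_ind_singleton x (e n), hmul, hσ (e n), hen n]
    rw [h1, mul_apply, ind_apply, if_pos (Set.mem_singleton n), mul_one]
  have hsing_fix : ∀ (k : ℕ) (C : H →L[ℂ] H), sing k C * ind {k} = sing k C := by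
    intro k C
    rw [mul_ind_singleton, sing_apply]
    simp
  have hinj : ∀ n, Function.Injective (ψ n) := by
    intro n A B hAB
    have h0 : ψ n (A - B) = 0 := by rw [map_sub, hAB, sub_self]
    have h0' : (Φ (sing (e n) (A - B)) : ∀ _ : ℕ, H →L[ℂ] H) n = 0 := h0
    have h3 : Φ (sing (e n) (A - B)) = Φ (sing (e n) (A - B)) * ind {n} := by
      conv_lhs => rw [← hsing_fix (e n) (A - B)]
      rw [hmul, hσ (e n), hen n]
    have h4 : Φ (sing (e n) (A - B)) = 0 := by
      apply lp.ext; funext m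
      have hm : (Φ (sing (e n) (A - B)) : ∀ _ : ℕ, H →L[ℂ] H) m =
          ((Φ (sing (e n) (A - B)) * ind {n} : lp (fun _ : ℕ => H →L[ℂ] H) ∞) :
            ∀ _ : ℕ, H →L[ℂ] H) m := by rw [← h3]
      rw [mul_apply, ind_apply] at hm
      by_cases hmn : m = n
      · subst hmn
        rw [lp.coeFn_zero, Pi.zero_apply]
        exact h0'
      · rw [if_neg (by simpa using hmn), mul_zero] at hm
        rw [lp.coeFn_zero, Pi.zero_apply]
        exact hm
    have h5 : sing (e n) (A - B) = 0 := hΦinj (by rw [h4, map_zero])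
    have := sing_eq_zero h5
    exact sub_eq_zero.1 this
  have hsurj : ∀ n, Function.Surjective (ψ n) := by
    intro n B
    obtain ⟨x, hx⟩ := hbij.2 (sing n B)
    refine ⟨(x : ∀ _ : ℕ, H →L[ℂ] H) (e n), ?_⟩
    calc ψ n ((x : ∀ _ : ℕ, H →L[ℂ] H) (e n))
        = (Φ x : ∀ _ : ℕ, H →L[ℂ] H) n := (key x n).symm
      _ = (sing n B : ∀ _ : ℕ, H →L[ℂ] H) n := by rw [hx]
      _ = B := by rw [sing_apply]; simp
  have hmulψ : ∀ n (A B : H →L[ℂ] H), ψ n (A * B) = ψ n A * ψ n B := by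
    intro n A B
    rw [ψdef, ψdef, ψdef, ← sing_mul_sing, hmul, mul_apply]
  exact ⟨ψ, e, fun n => ⟨⟨hinj n, hsurj n⟩, hmulψ n⟩, key⟩
end
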